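/- arXiv:2604.06615 — 4 statements merged into one kernel-verified Lean document; each statement's English description precedes it below -/
import Mathlib

section
/- Every Schur polynomial s_λ(x_1, ..., x_n) has a saturated Newton polytope: its support equals the set of integer lattice points of its Newton polytope, which is the λ-permutahedron P_λ. -/
open Finset

/-- The number of cells of the tableau `T` whose entry equals `v`. -/
def contentCount {μ : YoungDiagram} (T : SemistandardYoungTableau μ) (v : ℕ) : ℕ :=
  (μ.cells.filter fun c => T c.1 c.2 = v).card

/-- The Kostka number `K_{lam,mu}`: the number of semistandard Young tableaux of shape
`lam` and content `mu` (entries `0`-based). -/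
noncomputable def kostka (lam : YoungDiagram) (mu : ℕ → ℕ) : ℕ :=
  Set.ncard {T : SemistandardYoungTableau lam | ∀ v : ℕ, contentCount T v = mu v}

/-- The Schur polynomial `s_lam(x_1, …, x_n)`, via its monomial expansion
`s_lam = ∑_α K_{lam,α} x^α` over all exponent vectors `α` of total degree `|lam|`. -/
noncomputable def schur (lam : YoungDiagram) (n : ℕ) : MvPolynomial (Fin n) ℝ :=
  ∑ α ∈ Finset.Nat.antidiagonalTuple n lam.card,
    (kostka lam (fun v => if h : v < n then α ⟨v, h⟩ else 0) : ℝ) •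
      ∏ i, MvPolynomial.X i ^ α i

/-- The permutahedron `P_lam ⊆ ℝ^n`. -/
noncomputable def permutahedron (n : ℕ) (lam : ℕ → ℕ) : Set (Fin n → ℝ) :=
  convexHull ℝ {v | ∃ σ : Equiv.Perm (Fin n), v = fun i => (lam (σ i : ℕ) : ℝ)}

/-- The Newton polytope of a polynomial: the convex hull of its exponent vectors. -/
noncomputable def newtonPolytope {n : ℕ} (f : MvPolynomial (Fin n) ℝ) : Set (Fin n → ℝ) :=
  convexHull ℝ {v | ∃ α ∈ f.support, v = fun i => ((α i : ℕ) : ℝ)}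

/-- `f` has a saturated Newton polytope: the lattice points of `Newton(f)` are
exactly the exponent vectors in the support of `f`. -/
def SNP {n : ℕ} (f : MvPolynomial (Fin n) ℝ) : Prop :=
  ∀ α : Fin n → ℕ,
    ((fun i => (α i : ℝ)) ∈ newtonPolytope f ↔ ∃ β ∈ f.support, ∀ i, β i = α i)

/-- partial sums of row lengths -/
def psum (lam : YoungDiagram) (k : ℕ) : ℕ := ∑ i ∈ Finset.range k, lam.rowLen i

lemma psum_succ (lam : YoungDiagram) (k : ℕ) : psum lam (k+1) = psum lam k + lam.rowLen k :=
  Finset.sum_range_succ _ _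

lemma psum_mono (lam : YoungDiagram) : Monotone (psum lam) := by
  intro a b hab
  exact Finset.sum_le_sum_of_subset (Finset.range_subset_range.2 hab)

lemma row_cells_eq (lam : YoungDiagram) (i : ℕ) :
    lam.cells.filter (fun c => c.1 = i) = lam.row i := by
  ext c
  simp only [Finset.mem_filter, YoungDiagram.mem_row_iff, YoungDiagram.mem_cells]

/-- `psum lam k` counts cells in the first `k` rows. -/
lemma psum_eq_card_filter (lam : YoungDiagram) (k : ℕ) :
    psum lam k = (lam.cells.filter (fun c => c.1 < k)).card := by
  rw [Finset.card_eq_sum_card_fiberwise (f := fun c => c.1) (t := Finset.range k)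
    (fun c hc => by rw [Finset.mem_coe, Finset.mem_filter] at hc; exact Finset.mem_range.2 hc.2)]
  unfold psum
  refine Finset.sum_congr rfl fun i hi => ?_
  rw [YoungDiagram.rowLen_eq_card, ← row_cells_eq]
  rw [Finset.mem_range] at hi
  rw [Finset.filter_filter]
  congr 1
  apply Finset.filter_congr
  intro c _
  omega

lemma psum_le_card (lam : YoungDiagram) (k : ℕ) : psum lam k ≤ lam.card := by
  rw [psum_eq_card_filter]; exact Finset.card_filter_le _ _

lemma psum_eq_card (lam : YoungDiagram) (N : ℕ) (h : ∀ i, N ≤ i → lam.rowLen i = 0) :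
    psum lam N = lam.card := by
  rw [psum_eq_card_filter]
  congr 1
  rw [Finset.filter_true_of_mem]
  intro c hc
  by_contra hcontra
  push_neg at hcontra
  have h0 := h c.1 hcontra
  rw [YoungDiagram.mem_cells] at hc
  have : (c.1, c.2) ∈ lam := by simpa using hc
  rw [YoungDiagram.mem_iff_lt_rowLen] at this
  omega

lemma rowLen_eq_zero_of_psum_eq_card (lam : YoungDiagram) (N : ℕ) (h : psum lam N = lam.card)
    (i : ℕ) (hi : N ≤ i) : lam.rowLen i = 0 := by
  by_contra hne
  have h1 : psum lam (i+1) ≤ lam.card := psum_le_card _ _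
  have h2 : psum lam i + lam.rowLen i = psum lam (i+1) := (psum_succ _ _).symm
  have h3 := psum_mono lam hi
  omega

lemma le_apply_of_strictMono {k : ℕ} (f : Fin k → ℕ) (hf : StrictMono f) :
    ∀ (j : ℕ) (h : j < k), j ≤ f ⟨j, h⟩ := by
  intro j
  induction j with
  | zero => intro h; exact Nat.zero_le _
  | succ j ih =>
    intro h
    have h1 := ih (by omega)
    have h2 : f ⟨j, by omega⟩ < f ⟨j+1, h⟩ := hf (by simp [Fin.mk_lt_mk])
    omega

/-- Subset sums of an antitone function are at most top-`k` sums. -/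
lemma sum_subset_le_psum {n : ℕ} (f : ℕ → ℕ) (hf : ∀ a b : ℕ, a ≤ b → f b ≤ f a)
    (S : Finset (Fin n)) : ∑ i ∈ S, f (i : ℕ) ≤ ∑ k ∈ Finset.range S.card, f k := by
  classical
  set k := S.card with hk
  set e := S.orderEmbOfFin hk.symm with he
  have hsum : ∑ i ∈ S, f (i : ℕ) = ∑ m ∈ (Finset.univ : Finset (Fin k)), f ((e m : Fin n) : ℕ) := by
    refine (Finset.sum_bij (fun m _ => e m) (fun m _ => S.orderEmbOfFin_mem hk.symm m)
      (fun a _ b _ h => e.injective h) ?_ (fun m _ => rfl)).symm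
    intro i hi
    have : i ∈ Set.range e := by rw [he, Finset.range_orderEmbOfFin]; exact hi
    obtain ⟨m, hm⟩ := this
    exact ⟨m, Finset.mem_univ m, hm⟩
  rw [hsum, Finset.sum_range fun m => f m]
  apply Finset.sum_le_sum
  intro m _
  apply hf
  have hsm : StrictMono (fun m : Fin k => ((e m : Fin n) : ℕ)) := by
    intro a b hab
    exact (Fin.lt_iff_val_lt_val).1 (e.strictMono hab)
  exact le_apply_of_strictMono _ hsm m.1 m.2

/-! ### The shaved diagram -/

/-- Row lengths after removing a horizontal strip of `c` cells from the bottom of `lam`. -/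
def shaveFn (lam : YoungDiagram) (c i : ℕ) : ℕ :=
  (lam.rowLen i - c) + min (lam.rowLen (i+1)) c

lemma shaveFn_le (lam : YoungDiagram) (c i : ℕ) : shaveFn lam c i ≤ lam.rowLen i := by
  have h := lam.rowLen_anti i (i+1) (by omega)
  unfold shaveFn; omega

lemma le_shaveFn (lam : YoungDiagram) (c i : ℕ) : lam.rowLen (i+1) ≤ shaveFn lam c i := by
  have h := lam.rowLen_anti i (i+1) (by omega)
  unfold shaveFn; omega

lemma shaveFn_anti (lam : YoungDiagram) (c : ℕ) : ∀ i1 i2, i1 ≤ i2 →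
    shaveFn lam c i2 ≤ shaveFn lam c i1 := by
  have h : ∀ i, shaveFn lam c (i+1) ≤ shaveFn lam c i :=
    fun i => le_trans (shaveFn_le lam c (i+1)) (le_shaveFn lam c i)
  intro i1 i2 h12
  exact antitone_nat_of_succ_le h h12

/-- The diagram obtained by removing a horizontal strip of `c` cells from the bottom. -/
def shave (lam : YoungDiagram) (c : ℕ) : YoungDiagram where
  cells := lam.cells.filter (fun p => p.2 < shaveFn lam c p.1)
  isLowerSet := by
    intro p q hle hp
    simp only [Finset.coe_filter, Set.mem_setOf_eq, YoungDiagram.mem_cells] at hp ⊢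
    obtain ⟨hp1, hp2⟩ := hp
    refine ⟨lam.isLowerSet hle hp1, ?_⟩
    calc q.2 ≤ p.2 := hle.2
    _ < shaveFn lam c p.1 := hp2
    _ ≤ shaveFn lam c q.1 := shaveFn_anti lam c q.1 p.1 hle.1

lemma mem_shave (lam : YoungDiagram) (c : ℕ) (i j : ℕ) :
    (i, j) ∈ shave lam c ↔ j < shaveFn lam c i := by
  show (i,j) ∈ (shave lam c).cells ↔ _
  unfold shave
  simp only [Finset.mem_filter, YoungDiagram.mem_cells]
  constructor
  · rintro ⟨_, h⟩; exact h
  · intro h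
    refine ⟨?_, h⟩
    rw [YoungDiagram.mem_iff_lt_rowLen]
    exact lt_of_lt_of_le h (shaveFn_le lam c i)

lemma rowLen_shave (lam : YoungDiagram) (c : ℕ) (i : ℕ) :
    (shave lam c).rowLen i = shaveFn lam c i := by
  rcases lt_trichotomy ((shave lam c).rowLen i) (shaveFn lam c i) with h | h | h
  · exfalso
    have := (mem_shave lam c i ((shave lam c).rowLen i)).2 h
    rw [YoungDiagram.mem_iff_lt_rowLen] at this
    omega
  · exact h
  · exfalso
    have := (YoungDiagram.mem_iff_lt_rowLen).2 h
    rw [mem_shave] at this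
    omega

lemma shave_subset (lam : YoungDiagram) (c : ℕ) {i j : ℕ} (h : (i,j) ∈ shave lam c) :
    (i, j) ∈ lam := by
  rw [mem_shave] at h
  rw [YoungDiagram.mem_iff_lt_rowLen]
  exact lt_of_lt_of_le h (shaveFn_le lam c i)

lemma sum_sub_telescope (h : ℕ → ℕ) (hmono : ∀ i, h (i+1) ≤ h i) (N : ℕ) :
    ∑ i ∈ Finset.range N, (h i - h (i+1)) = h 0 - h N := by
  induction N with
  | zero => simp
  | succ N ih =>
    rw [Finset.sum_range_succ, ih]
    have h1 := hmono N
    have h2 : h N ≤ h 0 := antitone_nat_of_succ_le hmono (Nat.zero_le N)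
    omega

lemma psum_shave (lam : YoungDiagram) (c : ℕ) (hc0 : c ≤ lam.rowLen 0) (k : ℕ) :
    psum (shave lam c) k + (c - min (lam.rowLen k) c) = psum lam k := by
  have hper : ∀ i, lam.rowLen i =
      shaveFn lam c i + (min (lam.rowLen i) c - min (lam.rowLen (i+1)) c) := by
    intro i
    have h := lam.rowLen_anti i (i+1) (by omega)
    unfold shaveFn; omega
  have htel : ∑ i ∈ Finset.range k, (min (lam.rowLen i) c - min (lam.rowLen (i+1)) c)
      = c - min (lam.rowLen k) c := by
    have := sum_sub_telescope (fun i => min (lam.rowLen i) c)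
      (fun i => by have := lam.rowLen_anti i (i+1) (by omega); omega) k
    simpa [min_eq_right hc0, Nat.min_comm] using this
  unfold psum
  calc (∑ i ∈ Finset.range k, (shave lam c).rowLen i) + (c - min (lam.rowLen k) c)
      = (∑ i ∈ Finset.range k, shaveFn lam c i) + (c - min (lam.rowLen k) c) := by
        congr 1; exact Finset.sum_congr rfl fun i _ => rowLen_shave lam c i
    _ = ∑ i ∈ Finset.range k, lam.rowLen i := by
        rw [← htel, ← Finset.sum_add_distrib]
        exact (Finset.sum_congr rfl fun i _ => (hper i).symm)

/-! ### Existence of SSYT with prescribed dominated content -/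

lemma exists_ssyt_of_dom : ∀ (n : ℕ) (lam : YoungDiagram) (α : Fin n → ℕ),
    (∀ S : Finset (Fin n), ∑ i ∈ S, α i ≤ psum lam S.card) →
    (∑ i, α i = lam.card) →
    ∃ T : SemistandardYoungTableau lam, ∀ v : ℕ,
      contentCount T v = if h : v < n then α ⟨v, h⟩ else 0 := by
  intro n
  induction n with
  | zero =>
    intro lam α hd hs
    have hcard : lam.card = 0 := by simpa using hs.symm
    have hccells : lam.cells.card = lam.card := rfl
    refine ⟨⟨fun _ _ => 0, ?_, ?_, fun _ => rfl⟩, ?_⟩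
    · intro i j1 j2 _ hcell
      exact le_refl 0
    · intro i1 i2 j _ hcell
      exfalso
      have h1 : (i2, j) ∈ lam.cells := (YoungDiagram.mem_cells _).2 hcell
      have h2 := Finset.card_pos.2 ⟨_, h1⟩
      omega
    · intro v
      rw [dif_neg (by omega)]
      unfold contentCount
      exact Nat.eq_zero_of_le_zero (le_trans (Finset.card_filter_le _ _) (by omega))
  | succ n ih =>
    intro lam α hd hs
    set c := α (Fin.last n) with hc
    have hΛtot : psum lam (n+1) = lam.card := by
      have h1 := hd Finset.univ
      rw [Finset.card_univ, Fintype.card_fin] at h1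
      have h2 := psum_le_card lam (n+1)
      omega
    have hzero : ∀ i, n+1 ≤ i → lam.rowLen i = 0 :=
      rowLen_eq_zero_of_psum_eq_card lam (n+1) hΛtot
    have hc0 : c ≤ lam.rowLen 0 := by
      have h1 := hd {Fin.last n}
      simpa [psum] using h1
    have hcn : lam.rowLen n ≤ c := by
      have hS := hd (Finset.univ.erase (Fin.last n))
      rw [Finset.card_erase_of_mem (Finset.mem_univ _), Finset.card_univ,
        Fintype.card_fin] at hS
      have h2 : ∑ i ∈ Finset.univ.erase (Fin.last n), α i + c = ∑ i, α i :=
        Finset.sum_erase_add _ _ (Finset.mem_univ _)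
      have h3 : psum lam (n+1) = psum lam n + lam.rowLen n := psum_succ _ _
      simp only [Nat.add_sub_cancel] at hS
      omega
    set μ := shave lam c with hμ
    have hμzero : ∀ i, n ≤ i → μ.rowLen i = 0 := by
      intro i hi
      rw [hμ, rowLen_shave]
      have h1 : lam.rowLen i ≤ lam.rowLen n := lam.rowLen_anti n i hi
      have h2 : lam.rowLen (i+1) = 0 := hzero (i+1) (by omega)
      unfold shaveFn
      omega
    have hμcard : μ.card + c = lam.card := by
      have h1 := psum_shave lam c hc0 (n+1)
      rw [← hμ] at h1
      rw [psum_eq_card lam (n+1) hzero, psum_eq_card μ (n+1)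
        (fun i hi => hμzero i (by omega))] at h1
      have h2 : lam.rowLen (n+1) = 0 := hzero (n+1) (by omega)
      omega
    set α' : Fin n → ℕ := fun i => α i.castSucc with hα'
    have hd' : ∀ S : Finset (Fin n), ∑ i ∈ S, α' i ≤ psum μ S.card := by
      intro S
      set k := S.card with hk
      have hS1 : ∑ i ∈ S.map Fin.castSuccEmb, α i = ∑ i ∈ S, α' i :=
        Finset.sum_map _ _ _
      have hcard1 : (S.map Fin.castSuccEmb).card = k := Finset.card_map _
      have hpsum_k := psum_shave lam c hc0 k
      rw [← hμ] at hpsum_k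
      rcases le_total c (lam.rowLen k) with hcase | hcase
      · have h1 := hd (S.map Fin.castSuccEmb)
        rw [hcard1, hS1] at h1
        omega
      · have hlast : Fin.last n ∉ S.map Fin.castSuccEmb := by
          simp only [Finset.mem_map]
          rintro ⟨a, _, ha⟩
          exact absurd ha (Fin.castSucc_lt_last a).ne
        have h2 := hd (insert (Fin.last n) (S.map Fin.castSuccEmb))
        rw [Finset.card_insert_of_notMem hlast, hcard1, Finset.sum_insert hlast,
          hS1] at h2
        have h3 : psum lam (k+1) = psum lam k + lam.rowLen k := psum_succ _ _
        omega
    have hs' : ∑ i, α' i = μ.card := by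
      have h1 : ∑ i : Fin (n+1), α i = ∑ i : Fin n, α i.castSucc + α (Fin.last n) :=
        Fin.sum_univ_castSucc α
      show ∑ i : Fin n, α i.castSucc = μ.card
      omega
    obtain ⟨T', hT'⟩ := ih μ α' hd' hs'
    have hTlt : ∀ i j, (i,j) ∈ μ → T' i j < n := by
      intro i j hij
      by_contra hge
      push_neg at hge
      have h0 : contentCount T' (T' i j) = 0 := by rw [hT', dif_neg (by omega)]
      have h1 : (i,j) ∈ μ.cells.filter (fun p => T' p.1 p.2 = T' i j) :=
        Finset.mem_filter.2 ⟨(YoungDiagram.mem_cells _).2 hij, rfl⟩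
      have h2 := Finset.card_pos.2 ⟨_, h1⟩
      unfold contentCount at h0
      omega
    have hstrip : ∀ i1 i2 j, i1 < i2 → (i2, j) ∈ lam → (i2, j) ∉ μ → (i1, j) ∈ μ := by
      intro i1 i2 j h12 hmem _
      rw [hμ, mem_shave]
      rw [YoungDiagram.mem_iff_lt_rowLen] at hmem
      calc j < lam.rowLen i2 := hmem
        _ ≤ lam.rowLen (i1+1) := lam.rowLen_anti (i1+1) i2 (by omega)
        _ ≤ shaveFn lam c i1 := le_shaveFn lam c i1
    classical
    set f : ℕ → ℕ → ℕ :=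
      fun i j => if (i,j) ∈ μ then T' i j else if (i,j) ∈ lam then n else 0 with hfdef
    have hfapp : ∀ i j, f i j =
        if (i,j) ∈ μ then T' i j else if (i,j) ∈ lam then n else 0 := fun _ _ => rfl
    refine ⟨⟨f, ?_, ?_, ?_⟩, ?_⟩
    · -- row_weak'
      intro i j1 j2 hj hcell
      rw [hfapp, hfapp]
      by_cases h2 : (i, j2) ∈ μ
      · have h1 : (i, j1) ∈ μ := μ.isLowerSet (Prod.mk_le_mk.2 ⟨le_refl i, le_of_lt hj⟩) h2
        rw [if_pos h1, if_pos h2]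
        exact T'.row_weak hj h2
      · rw [if_neg h2, if_pos hcell]
        by_cases h1 : (i, j1) ∈ μ
        · rw [if_pos h1]; exact le_of_lt (hTlt _ _ h1)
        · rw [if_neg h1]
          by_cases h1' : (i, j1) ∈ lam
          · rw [if_pos h1']
          · rw [if_neg h1']; omega
    · -- col_strict'
      intro i1 i2 j hi hcell
      rw [hfapp, hfapp]
      by_cases h2 : (i2, j) ∈ μ
      · have h1 : (i1, j) ∈ μ := μ.isLowerSet (Prod.mk_le_mk.2 ⟨le_of_lt hi, le_refl j⟩) h2
        rw [if_pos h1, if_pos h2]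
        exact T'.col_strict hi h2
      · rw [if_neg h2, if_pos hcell]
        have h1 : (i1, j) ∈ μ := hstrip i1 i2 j hi hcell h2
        rw [if_pos h1]
        exact hTlt _ _ h1
    · -- zeros'
      intro i j hij
      rw [hfapp]
      have h1 : (i, j) ∉ μ := fun h => hij (shave_subset lam c h)
      rw [if_neg h1, if_neg hij]
    · -- content
      intro v
      show (lam.cells.filter fun p => f p.1 p.2 = v).card = _
      have hsub : μ.cells ⊆ lam.cells := by
        intro p hp
        rw [YoungDiagram.mem_cells] at hp ⊢
        rw [← Prod.mk.eta (p := p)] at hp ⊢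
        exact shave_subset lam c hp
      have hunion : μ.cells ∪ (lam.cells \ μ.cells) = lam.cells :=
        Finset.union_sdiff_of_subset hsub
      have hdisj : Disjoint (μ.cells) (lam.cells \ μ.cells) := Finset.disjoint_sdiff
      rw [← hunion, Finset.filter_union,
        Finset.card_union_of_disjoint (Finset.disjoint_filter_filter hdisj)]
      have hμpart : (μ.cells.filter fun p => f p.1 p.2 = v).card = contentCount T' v := by
        unfold contentCount
        congr 1
        apply Finset.filter_congr
        intro p hp
        rw [YoungDiagram.mem_cells, ← Prod.mk.eta (p := p)] at hp
        rw [hfapp, if_pos hp]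
      have hstrippart : ((lam.cells \ μ.cells).filter fun p => f p.1 p.2 = v).card
          = if v = n then c else 0 := by
        have hvals : ∀ p ∈ lam.cells \ μ.cells, f p.1 p.2 = n := by
          intro p hp
          rw [Finset.mem_sdiff] at hp
          obtain ⟨hp1, hp2⟩ := hp
          rw [YoungDiagram.mem_cells, ← Prod.mk.eta (p := p)] at hp1
          have hp2' : (p.1, p.2) ∉ μ := by
            rw [← YoungDiagram.mem_cells, Prod.mk.eta]
            exact hp2
          rw [hfapp, if_neg hp2', if_pos hp1]
        by_cases hv : v = n
        · rw [if_pos hv]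
          rw [Finset.filter_true_of_mem (fun p hp => by rw [hvals p hp, hv])]
          rw [Finset.card_sdiff_of_subset hsub]
          have e1 : lam.cells.card = lam.card := rfl
          have e2 : μ.cells.card = μ.card := rfl
          omega
        · rw [if_neg hv]
          rw [Finset.filter_false_of_mem
            (fun p hp => by rw [hvals p hp]; exact fun h => hv h.symm)]
          exact Finset.card_empty
      rw [hμpart, hstrippart, hT' v]
      rcases lt_trichotomy v n with hv | hv | hv
      · rw [dif_pos hv, dif_pos (by omega), if_neg (by omega)]
        show α' ⟨v, hv⟩ + 0 = α ⟨v, by omega⟩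
        rw [Nat.add_zero, hα']
        rfl
      · subst hv
        rw [dif_neg (by omega), dif_pos (by omega), if_pos rfl]
        show (0 : ℕ) + c = α ⟨v, by omega⟩
        rw [Nat.zero_add, hc]
        rfl
      · rw [dif_neg (by omega), dif_neg (by omega), if_neg (by omega)]

lemma entry_lt_of_content {lam : YoungDiagram} (T : SemistandardYoungTableau lam)
    (m : ℕ → ℕ) (hT : ∀ v, contentCount T v = m v) (n : ℕ) (hm : ∀ v, n ≤ v → m v = 0) :
    ∀ i j, (i, j) ∈ lam → T i j < n := by
  intro i j hij
  by_contra hge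
  push_neg at hge
  have h0 : contentCount T (T i j) = 0 := by rw [hT]; exact hm _ hge
  have h1 : (i, j) ∈ lam.cells.filter (fun p => T p.1 p.2 = T i j) :=
    Finset.mem_filter.2 ⟨(YoungDiagram.mem_cells _).2 hij, rfl⟩
  have h2 := Finset.card_pos.2 ⟨_, h1⟩
  unfold contentCount at h0
  omega

/-- Column-counting: the number of cells whose entry lies in `V` is at most
the number of cells in the first `V.card` rows. -/
lemma card_entry_mem_le (lam : YoungDiagram) (T : SemistandardYoungTableau lam)
    (V : Finset ℕ) :
    (lam.cells.filter (fun p => T p.1 p.2 ∈ V)).card ≤ psum lam V.card := by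
  classical
  set k := V.card with hk
  rw [psum_eq_card_filter]
  have hcol : ∀ (p : ℕ × ℕ), p ∈ lam.cells → p.2 ∈ Finset.range (lam.rowLen 0) := by
    intro p hp
    rw [YoungDiagram.mem_cells, ← Prod.mk.eta (p := p), YoungDiagram.mem_iff_lt_rowLen] at hp
    have := lam.rowLen_anti 0 p.1 (Nat.zero_le _)
    exact Finset.mem_range.2 (by omega)
  rw [Finset.card_eq_sum_card_fiberwise (f := fun p => p.2) (t := Finset.range (lam.rowLen 0))
    (fun p hp => hcol p (Finset.mem_filter.1 hp).1)]
  rw [Finset.card_eq_sum_card_fiberwise (f := fun p => p.2) (t := Finset.range (lam.rowLen 0))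
    (s := lam.cells.filter (fun c => c.1 < k))
    (fun p hp => hcol p (Finset.mem_filter.1 hp).1)]
  apply Finset.sum_le_sum
  intro j _
  -- per-column bound
  set A := (lam.cells.filter (fun p => T p.1 p.2 ∈ V)).filter (fun p => p.2 = j) with hA
  set B := (lam.cells.filter (fun c => c.1 < k)).filter (fun p => p.2 = j) with hB
  have memA : ∀ p, p ∈ A ↔ ((p.1, p.2) ∈ lam ∧ T p.1 p.2 ∈ V ∧ p.2 = j) := by
    intro p
    rw [hA, Finset.mem_filter, Finset.mem_filter, YoungDiagram.mem_cells,
      ← Prod.mk.eta (p := p)]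
    tauto
  have memB : ∀ p, p ∈ B ↔ ((p.1, p.2) ∈ lam ∧ p.1 < k ∧ p.2 = j) := by
    intro p
    rw [hB, Finset.mem_filter, Finset.mem_filter, YoungDiagram.mem_cells,
      ← Prod.mk.eta (p := p)]
    tauto
  have hBcard : B.card = min (lam.colLen j) k := by
    rw [← Finset.card_range (min (lam.colLen j) k)]
    apply Finset.card_bij (fun p _ => p.1)
    · intro p hp
      rw [memB] at hp
      obtain ⟨h1, h2, h3⟩ := hp
      have h1' : (p.1, j) ∈ lam := by rw [← h3]; exact h1
      rw [YoungDiagram.mem_iff_lt_colLen] at h1'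
      exact Finset.mem_range.2 (by omega)
    · intro p hp q hq hpq
      rw [memB] at hp hq
      have : p.2 = q.2 := by rw [hp.2.2, hq.2.2]
      exact Prod.ext hpq this
    · intro i hi
      rw [Finset.mem_range] at hi
      refine ⟨(i, j), ?_, rfl⟩
      rw [memB]
      refine ⟨?_, by omega, rfl⟩
      have : i < lam.colLen j := by omega
      exact YoungDiagram.mem_iff_lt_colLen.2 this
  have hA1 : A.card ≤ lam.colLen j := by
    rw [← Finset.card_range (lam.colLen j)]
    apply Finset.card_le_card_of_injOn (fun p => p.1)
    · intro p hp
      rw [Finset.mem_coe, memA] at hp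
      obtain ⟨h1, _, h3⟩ := hp
      have h1' : (p.1, j) ∈ lam := by rw [← h3]; exact h1
      rw [YoungDiagram.mem_iff_lt_colLen] at h1'
      exact Finset.mem_range.2 h1'
    · intro p hp q hq hpq
      rw [Finset.mem_coe, memA] at hp hq
      have : p.2 = q.2 := by rw [hp.2.2, hq.2.2]
      exact Prod.ext hpq this
  have hA2 : A.card ≤ k := by
    rw [hk]
    apply Finset.card_le_card_of_injOn (fun p => T p.1 p.2)
    · intro p hp
      rw [Finset.mem_coe, memA] at hp
      exact hp.2.1
    · intro p hp q hq hpq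
      rw [Finset.mem_coe, memA] at hp hq
      have hcol2 : p.2 = q.2 := by rw [hp.2.2, hq.2.2]
      have hpj : p.2 = j := hp.2.2
      have hqj : q.2 = j := hq.2.2
      have hpmem : (p.1, j) ∈ lam := by rw [← hpj]; exact hp.1
      have hqmem : (q.1, j) ∈ lam := by rw [← hqj]; exact hq.1
      have hTpq : T p.1 j = T q.1 j := by
        have : T p.1 p.2 = T q.1 q.2 := hpq
        rw [hpj, hqj] at this
        exact this
      rcases lt_trichotomy p.1 q.1 with h | h | h
      · exact absurd (T.col_strict h hqmem) (by omega)
      · exact Prod.ext h hcol2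
      · exact absurd (T.col_strict h hpmem) (by omega)
  omega

lemma sum_content_eq_card {lam : YoungDiagram} (T : SemistandardYoungTableau lam)
    (n : ℕ) (hlt : ∀ i j, (i, j) ∈ lam → T i j < n) :
    ∑ v ∈ Finset.range n, contentCount T v = lam.card := by
  classical
  have := Finset.card_eq_sum_card_fiberwise (s := lam.cells) (f := fun p => T p.1 p.2)
    (t := Finset.range n) (fun p hp => by
      rw [Finset.mem_coe, YoungDiagram.mem_cells, ← Prod.mk.eta (p := p)] at hp
      exact Finset.mem_range.2 (hlt _ _ hp))
  exact this.symm

lemma sum_content_on (lam : YoungDiagram) (T : SemistandardYoungTableau lam) (V : Finset ℕ) :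
    ∑ v ∈ V, contentCount T v = (lam.cells.filter (fun p => T p.1 p.2 ∈ V)).card := by
  classical
  have hfib := Finset.card_eq_sum_card_fiberwise
    (s := lam.cells.filter (fun p => T p.1 p.2 ∈ V)) (f := fun p => T p.1 p.2) (t := V)
    (fun p hp => (Finset.mem_filter.1 hp).2)
  rw [hfib]
  refine Finset.sum_congr rfl fun v hv => ?_
  unfold contentCount
  congr 1
  rw [Finset.filter_filter]
  apply Finset.filter_congr
  intro p _
  constructor
  · intro h2
    exact ⟨by rw [h2]; exact hv, h2⟩
  · rintro ⟨_, h2⟩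
    exact h2

/-- Every SSYT content is dominated. -/
lemma dom_of_content (n : ℕ) (lam : YoungDiagram) (α : Fin n → ℕ)
    (T : SemistandardYoungTableau lam)
    (hT : ∀ v : ℕ, contentCount T v = if h : v < n then α ⟨v, h⟩ else 0) :
    (∀ S : Finset (Fin n), ∑ i ∈ S, α i ≤ psum lam S.card) ∧ ∑ i, α i = lam.card := by
  classical
  have hlt : ∀ i j, (i, j) ∈ lam → T i j < n :=
    entry_lt_of_content T _ hT n (fun v hv => by rw [dif_neg (by omega)])
  constructor
  · intro S
    set V : Finset ℕ := S.image Fin.val with hV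
    have hVcard : V.card = S.card := Finset.card_image_of_injective _ Fin.val_injective
    have hsum1 : ∑ i ∈ S, α i = ∑ v ∈ V, contentCount T v := by
      rw [hV, Finset.sum_image (fun a _ b _ h => Fin.val_injective h)]
      refine Finset.sum_congr rfl fun i _ => ?_
      rw [hT]
      rw [dif_pos i.2]
    rw [hsum1, sum_content_on, ← hVcard]
    exact card_entry_mem_le lam T V
  · have h1 := sum_content_eq_card T n hlt
    have h2 : ∑ i : Fin n, α i = ∑ v ∈ Finset.range n, contentCount T v := by
      rw [← Fin.sum_univ_eq_sum_range (fun v => contentCount T v) n]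
      refine Finset.sum_congr rfl fun i _ => ?_
      rw [hT i.val, dif_pos i.2]
    omega

/-- The permutahedron is invariant under permuting coordinates. -/
lemma perm_mem_permutahedron {n : ℕ} {lam : ℕ → ℕ} {x : Fin n → ℝ}
    (hx : x ∈ permutahedron n lam) (σ : Equiv.Perm (Fin n)) :
    (x ∘ σ) ∈ permutahedron n lam := by
  classical
  set L : (Fin n → ℝ) →ₗ[ℝ] (Fin n → ℝ) := LinearMap.funLeft ℝ ℝ σ with hL
  have hLx : x ∘ σ = L x := rfl
  have himg := L.image_convexHull {v : Fin n → ℝ | ∃ τ : Equiv.Perm (Fin n),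
    v = fun i => (lam (τ i : ℕ) : ℝ)}
  have hmem : L x ∈ L '' permutahedron n lam := Set.mem_image_of_mem _ hx
  rw [permutahedron] at hmem
  rw [himg] at hmem
  rw [hLx]
  refine convexHull_mono ?_ hmem
  rintro v ⟨w, ⟨τ, rfl⟩, rfl⟩
  exact ⟨σ.trans τ, rfl⟩

lemma gen_mem_permutahedron {n : ℕ} (lam : ℕ → ℕ) (σ : Equiv.Perm (Fin n)) :
    (fun i => (lam (σ i : ℕ) : ℝ)) ∈ permutahedron n lam :=
  subset_convexHull ℝ _ ⟨σ, rfl⟩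

lemma isLinearMap_sum_coords {n : ℕ} (S : Finset (Fin n)) :
    IsLinearMap ℝ (fun y : Fin n → ℝ => ∑ i ∈ S, y i) := by
  constructor
  · intro x y; rw [← Finset.sum_add_distrib]; rfl
  · intro c x; simp [smul_eq_mul, Finset.mul_sum]

/-- Points of the permutahedron satisfy the partial sum inequalities and total equality. -/
lemma bounds_of_mem_permutahedron {n : ℕ} (lam : YoungDiagram)
    (hlen : ∀ i, n ≤ i → lam.rowLen i = 0) {x : Fin n → ℝ}
    (hx : x ∈ permutahedron n lam.rowLen) :
    (∀ S : Finset (Fin n), ∑ i ∈ S, x i ≤ (psum lam S.card : ℝ)) ∧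
      ∑ i, x i = (lam.card : ℝ) := by
  constructor
  · intro S
    have hconv : Convex ℝ {y : Fin n → ℝ | ∑ i ∈ S, y i ≤ (psum lam S.card : ℝ)} :=
      convex_halfSpace_le (isLinearMap_sum_coords S) _
    have hgen : {v : Fin n → ℝ | ∃ σ : Equiv.Perm (Fin n),
        v = fun i => (lam.rowLen (σ i : ℕ) : ℝ)} ⊆
        {y : Fin n → ℝ | ∑ i ∈ S, y i ≤ (psum lam S.card : ℝ)} := by
      rintro v ⟨σ, rfl⟩
      show (∑ i ∈ S, (lam.rowLen (σ i : ℕ) : ℝ)) ≤ _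
      have h1 : ∑ j ∈ S.image σ, lam.rowLen (j : ℕ) = ∑ i ∈ S, lam.rowLen (σ i : ℕ) :=
        Finset.sum_image (fun a _ b _ h => σ.injective h)
      have h2 : (S.image σ).card = S.card := Finset.card_image_of_injective _ σ.injective
      have h3 := sum_subset_le_psum lam.rowLen (fun a b hab => lam.rowLen_anti a b hab)
        (S.image σ)
      rw [h2, h1] at h3
      calc (∑ i ∈ S, (lam.rowLen (σ i : ℕ) : ℝ))
          = ((∑ i ∈ S, lam.rowLen (σ i : ℕ) : ℕ) : ℝ) := by push_cast; rfl
        _ ≤ ((psum lam S.card : ℕ) : ℝ) := by exact_mod_cast h3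
    exact convexHull_min hgen hconv hx
  · have hconv : Convex ℝ {y : Fin n → ℝ | ∑ i, y i = (lam.card : ℝ)} :=
      convex_hyperplane (isLinearMap_sum_coords Finset.univ) _
    have hgen : {v : Fin n → ℝ | ∃ σ : Equiv.Perm (Fin n),
        v = fun i => (lam.rowLen (σ i : ℕ) : ℝ)} ⊆
        {y : Fin n → ℝ | ∑ i, y i = (lam.card : ℝ)} := by
      rintro v ⟨σ, rfl⟩
      show (∑ i, (lam.rowLen (σ i : ℕ) : ℝ)) = _
      have h1 : ∑ i : Fin n, lam.rowLen (σ i : ℕ) = ∑ i : Fin n, lam.rowLen (i : ℕ) :=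
        Equiv.sum_comp σ (fun i => lam.rowLen (i : ℕ))
      have h2 : ∑ i : Fin n, lam.rowLen (i : ℕ) = psum lam n :=
        Fin.sum_univ_eq_sum_range (fun m => lam.rowLen m) n
      rw [psum_eq_card lam n hlen] at h2
      calc (∑ i, (lam.rowLen (σ i : ℕ) : ℝ)) = ((∑ i, lam.rowLen (σ i : ℕ) : ℕ) : ℝ) := by
            push_cast; rfl
        _ = (lam.card : ℝ) := by rw [h1, h2]
    exact convexHull_min hgen hconv hx

/-- sorting a tuple in decreasing order -/
lemma exists_sorting {n : ℕ} (α : Fin n → ℕ) :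
    ∃ σ : Equiv.Perm (Fin n), ∀ i j : Fin n, i ≤ j → α (σ j) ≤ α (σ i) := by
  refine ⟨(Fin.revPerm).trans (Tuple.sort α), ?_⟩
  intro i j hij
  have h1 : Fin.rev j ≤ Fin.rev i := Fin.rev_le_rev.2 hij
  exact Tuple.monotone_sort α h1

/-! ### Rado's theorem, hard direction -/

def extFn (n : ℕ) (α : Fin n → ℕ) : ℕ → ℕ := fun m => if h : m < n then α ⟨m, h⟩ else 0

def Apart (n : ℕ) (α : Fin n → ℕ) (k : ℕ) : ℕ := ∑ m ∈ Finset.range k, extFn n α m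

lemma Apart_succ (n : ℕ) (α : Fin n → ℕ) (k : ℕ) :
    Apart n α (k+1) = Apart n α k + extFn n α k := Finset.sum_range_succ _ _

lemma extFn_anti (n : ℕ) (α : Fin n → ℕ) (hsort : ∀ i j : Fin n, i ≤ j → α j ≤ α i) :
    ∀ a b : ℕ, a ≤ b → extFn n α b ≤ extFn n α a := by
  intro a b hab
  unfold extFn
  by_cases hb : b < n
  · rw [dif_pos hb, dif_pos (by omega)]
    exact hsort ⟨a, by omega⟩ ⟨b, hb⟩ hab
  · rw [dif_neg hb]
    exact Nat.zero_le _

lemma sum_filter_eq_Apart (n : ℕ) (α : Fin n → ℕ) (k : ℕ) (hk : k ≤ n) :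
    ∑ i ∈ Finset.univ.filter (fun i : Fin n => (i : ℕ) < k), α i = Apart n α k := by
  unfold Apart
  refine Finset.sum_bij (fun a _ => (a : ℕ)) ?_ ?_ ?_ ?_
  · intro a ha
    rw [Finset.mem_filter] at ha
    exact Finset.mem_range.2 ha.2
  · intro a _ b _ h
    exact Fin.val_injective h
  · intro b hb
    rw [Finset.mem_range] at hb
    exact ⟨⟨b, by omega⟩, Finset.mem_filter.2 ⟨Finset.mem_univ _, hb⟩, rfl⟩
  · intro a _
    rw [extFn, dif_pos a.2]

lemma card_filter_lt (n k : ℕ) (hk : k ≤ n) :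
    (Finset.univ.filter (fun i : Fin n => (i : ℕ) < k)).card = k := by
  conv_rhs => rw [← Finset.card_range k]
  refine Finset.card_bij (fun a _ => (a : ℕ)) ?_ ?_ ?_
  · intro a ha
    rw [Finset.mem_filter] at ha
    exact Finset.mem_range.2 ha.2
  · intro a _ b _ h
    exact Fin.val_injective h
  · intro b hb
    rw [Finset.mem_range] at hb
    exact ⟨⟨b, by omega⟩, Finset.mem_filter.2 ⟨Finset.mem_univ _, hb⟩, rfl⟩

lemma Apart_le_psum (n : ℕ) (lam : YoungDiagram) (α : Fin n → ℕ)
    (hd : ∀ S : Finset (Fin n), ∑ i ∈ S, α i ≤ psum lam S.card) (k : ℕ) (hk : k ≤ n) :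
    Apart n α k ≤ psum lam k := by
  have := hd (Finset.univ.filter (fun i : Fin n => (i : ℕ) < k))
  rw [card_filter_lt n k hk, sum_filter_eq_Apart n α k hk] at this
  exact this

lemma subset_sum_le_Apart (n : ℕ) (α : Fin n → ℕ)
    (hsort : ∀ i j : Fin n, i ≤ j → α j ≤ α i) (S : Finset (Fin n)) :
    ∑ i ∈ S, α i ≤ Apart n α S.card := by
  have h1 := sum_subset_le_psum (extFn n α) (extFn_anti n α hsort) S
  have h2 : ∑ i ∈ S, extFn n α (i : ℕ) = ∑ i ∈ S, α i := by
    refine Finset.sum_congr rfl fun i _ => ?_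
    rw [extFn, dif_pos i.2]
  rw [h2] at h1
  exact h1

lemma Apart_total (n : ℕ) (α : Fin n → ℕ) : Apart n α n = ∑ i, α i := by
  rw [← sum_filter_eq_Apart n α n (le_refl n)]
  congr 1
  rw [Finset.filter_true_of_mem (fun i _ => i.2)]

lemma sorted_dom_mem (n : ℕ) (lam : YoungDiagram) (hlen : ∀ i, n ≤ i → lam.rowLen i = 0) :
    ∀ (d : ℕ) (α : Fin n → ℕ),
    (∀ i j : Fin n, i ≤ j → α j ≤ α i) →
    (∀ S : Finset (Fin n), ∑ i ∈ S, α i ≤ psum lam S.card) →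
    (∑ i, α i = lam.card) →
    (∑ k ∈ Finset.range (n+1), (psum lam k - Apart n α k) ≤ d) →
    (fun i => (α i : ℝ)) ∈ permutahedron n lam.rowLen := by
  intro d
  induction d with
  | zero =>
    intro α hsort hd hs hD
    -- D = 0 forces α = rowLen, a vertex
    have hall : ∀ i : Fin n, α i = lam.rowLen (i : ℕ) := by
      have heq : ∀ k, k ≤ n → Apart n α k = psum lam k := by
        intro k hk
        have h1 : psum lam k - Apart n α k = 0 := by
          have := Finset.sum_eq_zero_iff.1 (Nat.le_zero.1 hD) k
            (Finset.mem_range.2 (by omega))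
          exact this
        have h2 := Apart_le_psum n lam α hd k hk
        omega
      intro i
      have h1 := heq (i : ℕ) (by omega)
      have h2 := heq ((i : ℕ) + 1) (by omega)
      have h3 := Apart_succ n α (i : ℕ)
      have h4 := psum_succ lam (i : ℕ)
      have h5 : extFn n α (i : ℕ) = α i := by rw [extFn, dif_pos i.2]
      omega
    have : (fun i => (α i : ℝ)) = fun i => (lam.rowLen (((1 : Equiv.Perm (Fin n)) i : Fin n) : ℕ) : ℝ) := by
      funext i
      rw [hall i]
      rfl
    rw [this]
    exact gen_mem_permutahedron lam.rowLen 1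
  | succ d ih =>
    intro α hsort hd hs hD
    by_cases hall : ∀ i : Fin n, α i = lam.rowLen (i : ℕ)
    · have : (fun i => (α i : ℝ)) = fun i => (lam.rowLen (((1 : Equiv.Perm (Fin n)) i : Fin n) : ℕ) : ℝ) := by
        funext i
        rw [hall i]
        rfl
      rw [this]
      exact gen_mem_permutahedron lam.rowLen 1
    · push_neg at hall
      obtain ⟨i0, hi0⟩ := hall
      have hne : ∃ m, m < n ∧ extFn n α m ≠ lam.rowLen m :=
        ⟨(i0 : ℕ), i0.2, by rw [extFn, dif_pos i0.2, Fin.eta]; exact hi0⟩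
      classical
      obtain ⟨p, ⟨hpn, hpne⟩, hpmin0⟩ : ∃ p, (p < n ∧ extFn n α p ≠ lam.rowLen p) ∧
          ∀ m, m < p → ¬(m < n ∧ extFn n α m ≠ lam.rowLen m) :=
        ⟨Nat.find hne, Nat.find_spec hne, fun m hm => Nat.find_min hne hm⟩
      have hpmin : ∀ m, m < p → extFn n α m = lam.rowLen m := by
        intro m hm
        have := hpmin0 m hm
        push_neg at this
        exact this (by omega)
      have hAp : Apart n α p = psum lam p := by
        unfold Apart psum
        exact Finset.sum_congr rfl fun m hm => hpmin m (Finset.mem_range.1 hm)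
      have hAle : ∀ k, k ≤ n → Apart n α k ≤ psum lam k := Apart_le_psum n lam α hd
      have hαp_lt : extFn n α p < lam.rowLen p := by
        rcases Nat.lt_or_ge (extFn n α p) (lam.rowLen p) with h | h
        · exact h
        · exfalso
          have h1 := hAle (p+1) (by omega)
          have h2 := Apart_succ n α p
          have h3 := psum_succ lam p
          omega
      have hkex : ∃ k, p < k ∧ k ≤ n ∧ Apart n α k = psum lam k := by
        refine ⟨n, by omega, le_refl n, ?_⟩
        rw [Apart_total, hs, psum_eq_card lam n hlen]
      obtain ⟨ks, ⟨hks1, hks2, hks3⟩, hksmin0⟩ : ∃ k, (p < k ∧ k ≤ n ∧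
          Apart n α k = psum lam k) ∧ ∀ j, j < k → ¬(p < j ∧ j ≤ n ∧
          Apart n α j = psum lam j) :=
        ⟨Nat.find hkex, Nat.find_spec hkex, fun j hj => Nat.find_min hkex hj⟩
      have hksmin : ∀ k, p < k → k < ks → Apart n α k < psum lam k := by
        intro k h1 h2
        have h3 := hksmin0 k h2
        push_neg at h3
        have h4 := h3 h1 (by omega)
        have h5 := hAle k (by omega)
        omega
      obtain ⟨q, hqks⟩ : ∃ q, q + 1 = ks := ⟨ks - 1, by omega⟩
      have hqp : p < q := by
        rcases Nat.lt_or_ge p q with h | h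
        · exact h
        · exfalso
          have h1 : ks = p + 1 := by omega
          have h2 := Apart_succ n α p
          have h3 := psum_succ lam p
          rw [h1] at hks3
          omega
      have hqn : q < n := by omega
      have hAq : Apart n α q + extFn n α q = psum lam q + lam.rowLen q := by
        have h1 := Apart_succ n α q
        have h2 := psum_succ lam q
        rw [hqks] at h1 h2
        omega
      have hαq_strict : lam.rowLen q + 1 ≤ extFn n α q := by
        have h1 := hAle q (by omega)
        rcases Nat.lt_or_ge (lam.rowLen q) (extFn n α q) with h | h
        · omega
        · exfalso
          have h2 : Apart n α q = psum lam q := by omega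
          exact absurd h2 (Nat.ne_of_lt (hksmin q hqp (by omega)))
      have hαq_pos : 1 ≤ extFn n α q := by
        have := lam.rowLen_anti 0 q (Nat.zero_le q)
        omega
      -- the transfer
      set pp : Fin n := ⟨p, by omega⟩ with hppdef
      set qq : Fin n := ⟨q, hqn⟩ with hqqdef
      have hppqq : pp ≠ qq := by
        simp only [hppdef, hqqdef, ne_eq, Fin.mk.injEq]
        omega
      have hαpp : α pp = extFn n α p := by rw [extFn, dif_pos]
      have hαqq : α qq = extFn n α q := by rw [extFn, dif_pos]
      set β : Fin n → ℕ := fun i => if i = pp then α i + 1 else if i = qq then α i - 1 else α i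
        with hβdef
      have hβapp : ∀ i, β i = if i = pp then α i + 1 else if i = qq then α i - 1 else α i :=
        fun _ => rfl
      have hβpp : β pp = α pp + 1 := by rw [hβapp, if_pos rfl]
      have hβqq : β qq = α qq - 1 := by rw [hβapp, if_neg (Ne.symm hppqq), if_pos rfl]
      have hkey : ∀ i, β i + (if i = qq then 1 else 0) = α i + (if i = pp then 1 else 0) := by
        intro i
        rw [hβapp]
        by_cases h1 : i = pp
        · rw [if_pos h1, if_pos h1, if_neg (by rw [h1]; exact hppqq)]
        · rw [if_neg h1, if_neg h1]
          by_cases h2 : i = qq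
          · rw [if_pos h2, if_pos h2]
            have : α i = extFn n α q := by rw [h2]; exact hαqq
            omega
          · rw [if_neg h2, if_neg h2]
      have hsumβ : ∀ S : Finset (Fin n), ∑ i ∈ S, β i + (if qq ∈ S then 1 else 0)
          = ∑ i ∈ S, α i + (if pp ∈ S then 1 else 0) := by
        intro S
        have h1 : ∑ i ∈ S, (β i + if i = qq then 1 else 0)
            = ∑ i ∈ S, (α i + if i = pp then 1 else 0) :=
          Finset.sum_congr rfl fun i _ => hkey i
        rw [Finset.sum_add_distrib, Finset.sum_add_distrib, Finset.sum_ite_eq' S qq (fun _ => (1:ℕ)),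
          Finset.sum_ite_eq' S pp (fun _ => (1:ℕ))] at h1
        -- h1 has `if qq ∈ S then 1 else 0` with  f := fun _ => 1
        exact h1
      have hdβ : ∀ S : Finset (Fin n), ∑ i ∈ S, β i ≤ psum lam S.card := by
        intro S
        have hkn : S.card ≤ n := by
          have := Finset.card_le_univ S
          simpa using this
        have hsumS := hsumβ S
        by_cases hpS : pp ∈ S
        · rw [if_pos hpS] at hsumS
          by_cases hqS : qq ∈ S
          · rw [if_pos hqS] at hsumS
            have := hd S
            omega
          · rw [if_neg hqS] at hsumS
            have hk1 : 1 ≤ S.card := Finset.card_pos.2 ⟨pp, hpS⟩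
            by_cases hk2 : S.card ≤ p
            · -- small subsets containing pp
              have he : ∑ i ∈ S.erase pp, α i + α pp = ∑ i ∈ S, α i :=
                Finset.sum_erase_add _ _ hpS
              have h2 := subset_sum_le_Apart n α hsort (S.erase pp)
              rw [Finset.card_erase_of_mem hpS] at h2
              have h3 := hAle (S.card - 1) (by omega)
              have h4 : lam.rowLen p ≤ lam.rowLen (S.card - 1) :=
                lam.rowLen_anti (S.card - 1) p (by omega)
              have h5 : psum lam ((S.card - 1) + 1) = psum lam (S.card - 1)
                  + lam.rowLen (S.card - 1) := psum_succ lam _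
              have h6 : (S.card - 1) + 1 = S.card := by omega
              rw [h6] at h5
              omega
            · push_neg at hk2
              by_cases hk3 : S.card < ks
              · have h2 := subset_sum_le_Apart n α hsort S
                have h3 := hksmin S.card hk2 hk3
                omega
              · push_neg at hk3
                have hkn' : S.card < n := by
                  rcases Nat.lt_or_ge S.card n with h | h
                  · exact h
                  · exfalso
                    have : S = Finset.univ := Finset.eq_univ_of_card S (by
                      rw [Fintype.card_fin]; omega)
                    rw [this] at hqS
                    exact hqS (Finset.mem_univ qq)
                have hqS' : qq ∉ S := hqS
                have h2 := hd (insert qq S)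
                rw [Finset.card_insert_of_notMem hqS', Finset.sum_insert hqS'] at h2
                have h3 : psum lam (S.card + 1) = psum lam S.card + lam.rowLen S.card :=
                  psum_succ lam _
                have h4 : lam.rowLen S.card ≤ lam.rowLen q := lam.rowLen_anti q S.card (by omega)
                omega
        · rw [if_neg hpS] at hsumS
          have := hd S
          omega
      have hsβ : ∑ i, β i = lam.card := by
        have h1 := hsumβ Finset.univ
        rw [if_pos (Finset.mem_univ _), if_pos (Finset.mem_univ _)] at h1
        omega
      -- sort β
      obtain ⟨π, hπ⟩ := exists_sorting β
      set β' : Fin n → ℕ := fun i => β (π i) with hβ'def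
      have hdβ' : ∀ S : Finset (Fin n), ∑ i ∈ S, β' i ≤ psum lam S.card := by
        intro S
        have h1 : ∑ j ∈ S.image π, β j = ∑ i ∈ S, β (π i) :=
          Finset.sum_image (fun a _ b _ h => π.injective h)
        have h2 : (S.image π).card = S.card := Finset.card_image_of_injective _ π.injective
        have h3 := hdβ (S.image π)
        rw [h2, h1] at h3
        exact h3
      have hsβ' : ∑ i, β' i = lam.card := by
        rw [hβ'def]
        rw [Equiv.sum_comp π β]
        exact hsβ
      -- measure decreases
      have hApartβ' : ∀ k, k ≤ n → Apart n α k + (if p < k then 1 else 0)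
          - (if q < k then 1 else 0) ≤ Apart n β' k := by
        intro k hk
        -- the β-sum over the prefix subset
        set Sk := Finset.univ.filter (fun i : Fin n => (i : ℕ) < k) with hSkdef
        have hSkcard : Sk.card = k := card_filter_lt n k hk
        have hppSk : pp ∈ Sk ↔ p < k := by
          rw [hSkdef, Finset.mem_filter]
          constructor
          · rintro ⟨_, h⟩; exact h
          · intro h; exact ⟨Finset.mem_univ _, h⟩
        have hqqSk : qq ∈ Sk ↔ q < k := by
          rw [hSkdef, Finset.mem_filter]
          constructor
          · rintro ⟨_, h⟩; exact h
          · intro h; exact ⟨Finset.mem_univ _, h⟩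
        have hsum1 := hsumβ Sk
        have hαSk : ∑ i ∈ Sk, α i = Apart n α k := sum_filter_eq_Apart n α k hk
        -- ∑_{Sk} β is a k-subset sum of β', hence ≤ Apart n β' k
        have himg : ∑ i ∈ Sk, β i = ∑ i ∈ Sk.image π.symm, β' i := by
          rw [Finset.sum_image (fun a _ b _ h => π.symm.injective h)]
          refine Finset.sum_congr rfl fun i _ => ?_
          rw [hβ'def]
          simp
        have hcard2 : (Sk.image π.symm).card = k := by
          rw [Finset.card_image_of_injective _ π.symm.injective, hSkcard]
        have hsub := subset_sum_le_Apart n β' (fun i j hij => hπ i j hij) (Sk.image π.symm)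
        rw [hcard2, ← himg] at hsub
        by_cases h1 : p < k <;> by_cases h2 : q < k <;>
          simp only [h1, h2, if_true, if_false, hppSk, hqqSk] at hsum1 ⊢ <;> omega
      have hstrictk : Apart n α (p+1) + 1 ≤ Apart n β' (p+1) ∧
          Apart n α (p+1) < psum lam (p+1) := by
        constructor
        · have := hApartβ' (p+1) (by omega)
          rw [if_pos (by omega), if_neg (by omega)] at this
          omega
        · have h2 := Apart_succ n α p
          have h3 := psum_succ lam p
          omega
      have hDβ' : ∑ k ∈ Finset.range (n+1), (psum lam k - Apart n β' k) ≤ d := by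
        have hlt : ∑ k ∈ Finset.range (n+1), (psum lam k - Apart n β' k)
            < ∑ k ∈ Finset.range (n+1), (psum lam k - Apart n α k) := by
          apply Finset.sum_lt_sum
          · intro k hkmem
            rw [Finset.mem_range] at hkmem
            have hk := hApartβ' k (by omega)
            by_cases h1 : p < k
            · by_cases h2 : q < k
              · rw [if_pos h1, if_pos h2] at hk; omega
              · rw [if_pos h1, if_neg h2] at hk; omega
            · rw [if_neg h1, if_neg (by omega)] at hk; omega
          · refine ⟨p+1, Finset.mem_range.2 (by omega), ?_⟩
            obtain ⟨h1, h2⟩ := hstrictk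
            omega
        omega
      have hmemβ' := ih β' (fun i j hij => hπ i j hij) hdβ' hsβ' hDβ'
      -- transfer membership to β and β∘swap
      have hmemβ : (fun i => (β i : ℝ)) ∈ permutahedron n lam.rowLen := by
        have h1 := perm_mem_permutahedron hmemβ' π.symm
        have h2 : ((fun i => (β' i : ℝ)) ∘ π.symm) = fun i => (β i : ℝ) := by
          funext i
          show ((β' (π.symm i) : ℕ) : ℝ) = _
          rw [hβ'def]
          simp
        rw [h2] at h1
        exact h1
      have hmemβs : (fun i => (β (Equiv.swap pp qq i) : ℝ)) ∈ permutahedron n lam.rowLen := by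
        have h1 := perm_mem_permutahedron hmemβ (Equiv.swap pp qq)
        exact h1
      -- convex combination
      set m : ℝ := (α pp : ℝ) - (α qq : ℝ) + 2 with hmdef
      have hαpq : α qq ≤ α pp := hsort pp qq (by rw [hppdef, hqqdef]; exact Fin.mk_le_mk.2 (by omega))
      have hm2 : (2 : ℝ) ≤ m := by
        rw [hmdef]
        have : (α qq : ℝ) ≤ (α pp : ℝ) := by exact_mod_cast hαpq
        linarith
      have hmne : m ≠ 0 := by linarith
      set t : ℝ := 1 / m with htdef
      have ht0 : 0 ≤ t := by positivity
      have ht1 : t ≤ 1 := by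
        rw [htdef]
        rw [div_le_one (by linarith)]
        linarith
      have htm : t * m = 1 := by
        rw [htdef]
        field_simp
      have hconv := (convex_convexHull ℝ {v : Fin n → ℝ | ∃ σ : Equiv.Perm (Fin n),
        v = fun i => (lam.rowLen (σ i : ℕ) : ℝ)}) hmemβ hmemβs (by linarith : (0:ℝ) ≤ 1 - t) ht0
        (by ring)
      have hcombo : (1 - t) • (fun i => (β i : ℝ)) + t • (fun i => (β (Equiv.swap pp qq i) : ℝ))
          = fun i => (α i : ℝ) := by
        funext i
        show (1 - t) * (β i : ℝ) + t * (β (Equiv.swap pp qq i) : ℝ) = (α i : ℝ)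
        have hq1 : (β qq : ℝ) = (α qq : ℝ) - 1 := by
          rw [hβqq]
          have : 1 ≤ α qq := by rw [hαqq]; exact hαq_pos
          push_cast [this]
          ring
        have hp1 : (β pp : ℝ) = (α pp : ℝ) + 1 := by rw [hβpp]; push_cast; ring
        by_cases h1 : i = pp
        · rw [h1, Equiv.swap_apply_left, hq1, hp1]
          have hx : (1 - t) * ((α pp : ℝ) + 1) + t * ((α qq : ℝ) - 1)
              = (α pp : ℝ) + 1 - t * m := by rw [hmdef]; ring
          rw [hx, htm]
          ring
        · by_cases h2 : i = qq
          · rw [h2, Equiv.swap_apply_right, hq1, hp1]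
            have hx : (1 - t) * ((α qq : ℝ) - 1) + t * ((α pp : ℝ) + 1)
                = (α qq : ℝ) - 1 + t * m := by rw [hmdef]; ring
            rw [hx, htm]
            ring
          · rw [Equiv.swap_apply_of_ne_of_ne h1 h2]
            have hx : β i = α i := by rw [hβapp, if_neg h1, if_neg h2]
            rw [hx]
            ring
      rw [hcombo] at hconv
      exact hconv

/-- Dominated integer vectors lie in the permutahedron. -/
lemma mem_perm_of_dom (n : ℕ) (lam : YoungDiagram) (hlen : ∀ i, n ≤ i → lam.rowLen i = 0)
    (α : Fin n → ℕ)
    (hd : ∀ S : Finset (Fin n), ∑ i ∈ S, α i ≤ psum lam S.card)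
    (hs : ∑ i, α i = lam.card) :
    (fun i => (α i : ℝ)) ∈ permutahedron n lam.rowLen := by
  obtain ⟨π, hπ⟩ := exists_sorting α
  set α' : Fin n → ℕ := fun i => α (π i) with hα'def
  have hd' : ∀ S : Finset (Fin n), ∑ i ∈ S, α' i ≤ psum lam S.card := by
    intro S
    have h1 : ∑ j ∈ S.image π, α j = ∑ i ∈ S, α (π i) :=
      Finset.sum_image (fun a _ b _ h => π.injective h)
    have h2 : (S.image π).card = S.card := Finset.card_image_of_injective _ π.injective
    have h3 := hd (S.image π)
    rw [h2, h1] at h3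
    exact h3
  have hs' : ∑ i, α' i = lam.card := by
    rw [hα'def, Equiv.sum_comp π α]
    exact hs
  have hmem := sorted_dom_mem n lam hlen
    (∑ k ∈ Finset.range (n+1), (psum lam k - Apart n α' k)) α'
    (fun i j hij => hπ i j hij) hd' hs' (le_refl _)
  have h1 := perm_mem_permutahedron hmem π.symm
  have h2 : ((fun i => (α' i : ℝ)) ∘ π.symm) = fun i => (α i : ℝ) := by
    funext i
    show ((α' (π.symm i) : ℕ) : ℝ) = _
    rw [hα'def]
    simp
  rw [h2] at h1
  exact h1

/-! ### Kostka positivity bridge -/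

lemma kostka_set_finite (lam : YoungDiagram) (n : ℕ) (m : ℕ → ℕ)
    (hm : ∀ v, n ≤ v → m v = 0) :
    {T : SemistandardYoungTableau lam | ∀ v : ℕ, contentCount T v = m v}.Finite := by
  classical
  set s := {T : SemistandardYoungTableau lam | ∀ v : ℕ, contentCount T v = m v} with hs
  set f : SemistandardYoungTableau lam → (↥lam.cells → Fin (n+1)) :=
    fun T c => ⟨min (T (c : ℕ × ℕ).1 (c : ℕ × ℕ).2) n, by omega⟩ with hf
  have hinj : Set.InjOn f s := by
    intro T1 h1 T2 h2 hf12
    have hlt1 := entry_lt_of_content T1 m h1 n hm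
    have hlt2 := entry_lt_of_content T2 m h2 n hm
    ext i j
    by_cases hij : (i, j) ∈ lam
    · have hc : (i, j) ∈ lam.cells := (YoungDiagram.mem_cells _).2 hij
      have := congrFun hf12 ⟨(i, j), hc⟩
      rw [hf] at this
      simp only [Fin.mk.injEq] at this
      have e1 := hlt1 i j hij
      have e2 := hlt2 i j hij
      omega
    · rw [T1.zeros hij, T2.zeros hij]
  exact Set.Finite.of_finite_image (Set.toFinite _) hinj

lemma kostka_extFn_ne_zero (n : ℕ) (lam : YoungDiagram) (α : Fin n → ℕ)
    (hd : ∀ S : Finset (Fin n), ∑ i ∈ S, α i ≤ psum lam S.card)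
    (hs : ∑ i, α i = lam.card) :
    kostka lam (extFn n α) ≠ 0 := by
  obtain ⟨T, hT⟩ := exists_ssyt_of_dom n lam α hd hs
  have hfin := kostka_set_finite lam n (extFn n α)
    (fun v hv => by rw [extFn, dif_neg (by omega)])
  have hpos := (Set.ncard_pos (hfin)).2 ⟨T, hT⟩
  unfold kostka
  omega

lemma dom_of_kostka_ne_zero (n : ℕ) (lam : YoungDiagram) (α : Fin n → ℕ)
    (h : kostka lam (extFn n α) ≠ 0) :
    (∀ S : Finset (Fin n), ∑ i ∈ S, α i ≤ psum lam S.card) ∧ ∑ i, α i = lam.card := by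
  obtain ⟨T, hT⟩ := Set.nonempty_of_ncard_ne_zero h
  exact dom_of_content n lam α T hT

/-! ### The support of the Schur polynomial -/

lemma prod_pow_eq_monomial {n : ℕ} (α : Fin n → ℕ) :
    (∏ i, (MvPolynomial.X i : MvPolynomial (Fin n) ℝ) ^ α i)
      = MvPolynomial.monomial (Finsupp.equivFunOnFinite.symm α) 1 := by
  rw [MvPolynomial.monomial_eq, MvPolynomial.C_1, one_mul]
  rw [Finsupp.prod]
  rw [← Finset.prod_subset (Finset.subset_univ (Finsupp.equivFunOnFinite.symm α).support)
    (fun i _ hi => by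
      have h0 : α i = 0 := Finsupp.notMem_support_iff.1 hi
      rw [h0, pow_zero])]
  rfl

lemma coeff_schur (lam : YoungDiagram) (n : ℕ) (m : Fin n →₀ ℕ) :
    MvPolynomial.coeff m (schur lam n) =
      if ∑ i, m i = lam.card then (kostka lam (extFn n ⇑m) : ℝ) else 0 := by
  classical
  unfold schur
  rw [MvPolynomial.coeff_sum]
  have h1 : ∀ α ∈ Finset.Nat.antidiagonalTuple n lam.card,
      MvPolynomial.coeff m ((kostka lam (fun v => if h : v < n then α ⟨v, h⟩ else 0) : ℝ) •
        ∏ i, MvPolynomial.X i ^ α i)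
      = if α = ⇑m then (kostka lam (extFn n α) : ℝ) else 0 := by
    intro α _
    rw [MvPolynomial.coeff_smul, prod_pow_eq_monomial, MvPolynomial.coeff_monomial]
    by_cases h : Finsupp.equivFunOnFinite.symm α = m
    · rw [if_pos h, if_pos]
      · rw [smul_eq_mul, mul_one]
        rfl
      · rw [← h]
        rfl
    · rw [if_neg h, if_neg, smul_zero]
      intro hc
      apply h
      rw [hc]
      exact Finsupp.equivFunOnFinite.symm_apply_apply m
  rw [Finset.sum_congr rfl h1, Finset.sum_ite_eq' _ (⇑m)
    (fun α => (kostka lam (extFn n α) : ℝ))]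
  by_cases hmem : (⇑m : Fin n → ℕ) ∈ Finset.Nat.antidiagonalTuple n lam.card
  · rw [if_pos hmem, if_pos]
    exact Finset.Nat.mem_antidiagonalTuple.1 hmem
  · rw [if_neg hmem, if_neg]
    intro hc
    exact hmem (Finset.Nat.mem_antidiagonalTuple.2 hc)

lemma mem_support_schur (lam : YoungDiagram) (n : ℕ) (m : Fin n →₀ ℕ) :
    m ∈ (schur lam n).support ↔
      (∑ i, m i = lam.card ∧ kostka lam (extFn n ⇑m) ≠ 0) := by
  rw [MvPolynomial.mem_support_iff, coeff_schur]
  by_cases h : ∑ i, m i = lam.card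
  · rw [if_pos h]
    simp [h, Nat.cast_ne_zero]
  · rw [if_neg h]
    simp [h]

/-- every Schur polynomial `s_lam(x_1,…,x_n)` (with `ℓ(lam) ≤ n`) is SNP,
and its Newton polytope is the permutahedron `P_lam`. -/
theorem stmt2 (n : ℕ) (lam : YoungDiagram) (hlen : ∀ i, n ≤ i → lam.rowLen i = 0) :
    SNP (schur lam n) ∧ newtonPolytope (schur lam n) = permutahedron n lam.rowLen := by
  classical
  set E := {v : Fin n → ℝ | ∃ β ∈ (schur lam n).support, v = fun i => ((β i : ℕ) : ℝ)} with hE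
  have hEP : E ⊆ permutahedron n lam.rowLen := by
    rintro v ⟨β, hβ, rfl⟩
    rw [mem_support_schur] at hβ
    obtain ⟨hsm, hk⟩ := hβ
    obtain ⟨hd', hs'⟩ := dom_of_kostka_ne_zero n lam ⇑β hk
    exact mem_perm_of_dom n lam hlen ⇑β hd' hs'
  have hNPsub : newtonPolytope (schur lam n) ⊆ permutahedron n lam.rowLen :=
    convexHull_min hEP (convex_convexHull ℝ _)
  have hgenE : {v : Fin n → ℝ | ∃ σ : Equiv.Perm (Fin n),
      v = fun i => (lam.rowLen (σ i : ℕ) : ℝ)} ⊆ E := by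
    rintro v ⟨σ, rfl⟩
    set αg : Fin n → ℕ := fun i => lam.rowLen (σ i : ℕ) with hαg
    have hd : ∀ S : Finset (Fin n), ∑ i ∈ S, αg i ≤ psum lam S.card := by
      intro S
      have h1 : ∑ j ∈ S.image σ, lam.rowLen (j : ℕ) = ∑ i ∈ S, lam.rowLen (σ i : ℕ) :=
        Finset.sum_image (fun a _ b _ h => σ.injective h)
      have h2 : (S.image σ).card = S.card := Finset.card_image_of_injective _ σ.injective
      have h3 := sum_subset_le_psum lam.rowLen (fun a b hab => lam.rowLen_anti a b hab)
        (S.image σ)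
      rw [h2, h1] at h3
      exact h3
    have hsum : ∑ i, αg i = lam.card := by
      have h1 : ∑ i : Fin n, lam.rowLen (σ i : ℕ) = ∑ i : Fin n, lam.rowLen (i : ℕ) :=
        Equiv.sum_comp σ (fun i => lam.rowLen (i : ℕ))
      have h2 : ∑ i : Fin n, lam.rowLen (i : ℕ) = psum lam n :=
        Fin.sum_univ_eq_sum_range (fun m => lam.rowLen m) n
      rw [hαg]
      rw [h1, h2, psum_eq_card lam n hlen]
    have hk := kostka_extFn_ne_zero n lam αg hd hsum
    refine ⟨Finsupp.equivFunOnFinite.symm αg, ?_, ?_⟩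
    · rw [mem_support_schur]
      exact ⟨hsum, hk⟩
    · funext i
      rfl
  have hPsub : permutahedron n lam.rowLen ⊆ newtonPolytope (schur lam n) :=
    convexHull_min (le_trans hgenE (subset_convexHull ℝ E)) (convex_convexHull ℝ _)
  have hNP : newtonPolytope (schur lam n) = permutahedron n lam.rowLen :=
    le_antisymm hNPsub hPsub
  refine ⟨?_, hNP⟩
  intro α
  constructor
  · intro hα
    rw [hNP] at hα
    obtain ⟨hb, he⟩ := bounds_of_mem_permutahedron lam hlen hα
    have hd : ∀ S : Finset (Fin n), ∑ i ∈ S, α i ≤ psum lam S.card := by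
      intro S
      have h1 := hb S
      have hcast : ((∑ i ∈ S, α i : ℕ) : ℝ) = ∑ i ∈ S, (α i : ℝ) := by push_cast; rfl
      rw [← hcast] at h1
      exact_mod_cast h1
    have hsum : ∑ i, α i = lam.card := by
      have hcast : ((∑ i, α i : ℕ) : ℝ) = ∑ i, (α i : ℝ) := by push_cast; rfl
      rw [← hcast] at he
      exact_mod_cast he
    have hk := kostka_extFn_ne_zero n lam α hd hsum
    refine ⟨Finsupp.equivFunOnFinite.symm α, ?_, fun i => rfl⟩
    rw [mem_support_schur]
    exact ⟨hsum, hk⟩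
  · rintro ⟨β, hβ, hβα⟩
    have hmem : (fun i => (α i : ℝ)) ∈ E := ⟨β, hβ, by funext i; rw [hβα i]⟩
    exact subset_convexHull ℝ _ hmem
end

section
/- If β is a refinement of the composition α (both compositions of n), and γ is any composition of N with n parts, then the meld γ|_β is dominated by the meld γ|_α, i.e. every partial sum obtainable from γ|_α is at least the corresponding partial sum of γ|_β; consequently sort(γ|_β) ⊴ sort(γ|_α) in the dominance order on partitions of N. -/
open Finset

/-- `mu` is dominated by `lam`: every partial sum of `mu` is at most that of `lam`. -/
def Dominated (mu lam : ℕ → ℕ) : Prop :=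
  ∀ k : ℕ, ∑ i ∈ Finset.range k, mu i ≤ ∑ i ∈ Finset.range k, lam i

/-- The first `ℓ` values of `c` sorted into weakly decreasing order (padded by zeros):
the partition obtained by sorting the composition `(c 0, …, c (ℓ-1))`. -/
noncomputable def sortPart (c : ℕ → ℕ) (ℓ : ℕ) : ℕ → ℕ := fun i =>
  (Multiset.sort ((Finset.range ℓ).val.map c) (· ≥ ·)).getD i 0

/-- `α` is a composition of `n` with `ℓ` parts: positive parts `α 0, …, α (ℓ-1)` summing
to `n` (and `0` beyond). -/
def IsComposition (α : ℕ → ℕ) (ℓ n : ℕ) : Prop :=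
  (∀ i < ℓ, 0 < α i) ∧ (∀ i, ℓ ≤ i → α i = 0) ∧ ∑ i ∈ Finset.range ℓ, α i = n

/-- The meld `γ|_α`: its `k`-th part is the sum of `γ` over the `k`-th consecutive block
of size `α k`. -/
def meld (γ α : ℕ → ℕ) (k : ℕ) : ℕ :=
  ∑ i ∈ Finset.Ico (∑ j ∈ Finset.range k, α j) (∑ j ∈ Finset.range (k + 1), α j), γ i

/-- `β` (with `ℓβ` parts) is a refinement of `α` (with `ℓα` parts): each part of `α` is
the sum of a consecutive run of parts of `β`. -/
def Refines (β : ℕ → ℕ) (ℓβ : ℕ) (α : ℕ → ℕ) (ℓα : ℕ) : Prop :=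
  ∃ t : ℕ → ℕ, Monotone t ∧ t 0 = 0 ∧ (∀ k, ℓα ≤ k → t k = ℓβ) ∧
    ∀ k, α k = ∑ j ∈ Finset.Ico (t k) (t (k + 1)), β j

section Aux

/-- partial sums of getD equal sum of take -/
lemma sum_getD_eq_take (L : List ℕ) (k : ℕ) :
    ∑ i ∈ Finset.range k, L.getD i 0 = (L.take k).sum := by
  induction k with
  | zero => simp
  | succ m ih =>
    rw [Finset.sum_range_succ, ih, List.take_succ, List.sum_append]
    congr 1
    cases h : L[m]? with
    | none => simp [List.getD, h]
    | some a => simp [List.getD, h]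

lemma getD_le_of_sorted_cons {a : ℕ} {L : List ℕ} (h : (a :: L).Pairwise (· ≥ ·)) (m : ℕ) :
    L.getD m 0 ≤ a := by
  by_cases hm : m < L.length
  · have : L.getD m 0 ∈ L := by
      rw [List.getD_eq_getElem _ _ hm]; exact List.getElem_mem hm
    exact (List.pairwise_cons.mp h).1 _ this
  · rw [List.getD_eq_default _ _ (le_of_not_gt hm)]
    exact Nat.zero_le _

lemma take_sum_cons_le {a : ℕ} {L : List ℕ} (h : (a :: L).Pairwise (· ≥ ·)) (n : ℕ) :
    (L.take n).sum ≤ ((a :: L).take n).sum := by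
  cases n with
  | zero => simp
  | succ m =>
    have h1 : (L.take (m + 1)).sum = (L.take m).sum + L.getD m 0 := by
      rw [← sum_getD_eq_take, ← sum_getD_eq_take, Finset.sum_range_succ]
    rw [h1]
    have : ((a :: L).take (m + 1)).sum = a + (L.take m).sum := by simp [List.take_succ_cons]
    rw [this]
    have := getD_le_of_sorted_cons h m
    omega

/-- any sublist of a sorted-decreasing list has sum at most the corresponding prefix -/
lemma sublist_sum_le_take {l' L : List ℕ} (h : l'.Sublist L) :
    L.Pairwise (· ≥ ·) → l'.sum ≤ (L.take l'.length).sum := by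
  induction h with
  | slnil => simp
  | @cons l₁ l₂ a h ih =>
    intro hs
    have hs' : l₂.Pairwise (· ≥ ·) := (List.pairwise_cons.mp hs).2
    exact le_trans (ih hs') (take_sum_cons_le hs _)
  | @cons_cons l₁ l₂ a h ih =>
    intro hs
    have hs' : l₂.Pairwise (· ≥ ·) := (List.pairwise_cons.mp hs).2
    simpa using Nat.add_le_add_left (ih hs') a

lemma take_sum_mono (L : List ℕ) {m k : ℕ} (h : m ≤ k) :
    (L.take m).sum ≤ (L.take k).sum := by
  rw [← sum_getD_eq_take, ← sum_getD_eq_take]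
  exact Finset.sum_le_sum_of_subset (Finset.range_subset_range.mpr h)

/-- (a): sum over any subset of ≤ k indices is at most the top-k sorted sum -/
lemma sum_le_sortPart (c : ℕ → ℕ) (ℓ k : ℕ) (S : Finset ℕ) (hS : S ⊆ Finset.range ℓ)
    (hcard : S.card ≤ k) :
    ∑ i ∈ S, c i ≤ ∑ i ∈ Finset.range k, sortPart c ℓ i := by
  set L := Multiset.sort ((Finset.range ℓ).val.map c) (· ≥ ·) with hLdef
  have hLsort : L.Pairwise (· ≥ ·) := Multiset.pairwise_sort _ _
  have hLco : (↑L : Multiset ℕ) = (Finset.range ℓ).val.map c := Multiset.sort_eq _ _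
  -- the multiset of values on S
  have hT : (S.val.map c : Multiset ℕ) ≤ ↑L := by
    rw [hLco]; exact Multiset.map_le_map (Finset.val_le_iff.mpr hS)
  set T : Multiset ℕ := S.val.map c with hTdef
  have hT2 : (↑T.toList : Multiset ℕ) ≤ ↑L := by rw [Multiset.coe_toList]; exact hT
  obtain ⟨l, hperm, hsub⟩ := Multiset.coe_le.mp hT2
  have hlen : l.length = S.card := by
    rw [hperm.length_eq, Multiset.length_toList, hTdef, Multiset.card_map]; rfl
  have hsum : ∑ i ∈ S, c i = l.sum := by
    have h5 : l.sum = T.sum := by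
      rw [hperm.sum_eq, Multiset.sum_toList]
    rw [h5, hTdef]
    rfl
  calc ∑ i ∈ S, c i = l.sum := hsum
    _ ≤ (L.take l.length).sum := sublist_sum_le_take hsub hLsort
    _ ≤ (L.take k).sum := take_sum_mono _ (by omega)
    _ = ∑ i ∈ Finset.range k, sortPart c ℓ i := by
        rw [← sum_getD_eq_take]
        rfl

/-- (b): the top-k sorted sum is achieved by some subset of ≤ k indices -/
lemma sortPart_eq_sum (c : ℕ → ℕ) (ℓ k : ℕ) :
    ∃ S : Finset ℕ, S ⊆ Finset.range ℓ ∧ S.card ≤ k ∧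
      ∑ i ∈ Finset.range k, sortPart c ℓ i = ∑ i ∈ S, c i := by
  set L := Multiset.sort ((Finset.range ℓ).val.map c) (· ≥ ·) with hLdef
  have hLco : (↑L : Multiset ℕ) = (Finset.range ℓ).val.map c := Multiset.sort_eq _ _
  have hM : ((Finset.range ℓ).val.map c : Multiset ℕ) = ↑((List.range ℓ).map c) := rfl
  have hsubperm : (L.take k).Subperm ((List.range ℓ).map c) := by
    refine List.Subperm.trans (List.Sublist.subperm (List.take_sublist _ _)) ?_
    refine List.Perm.subperm ?_
    have : (↑L : Multiset ℕ) = ↑((List.range ℓ).map c) := by rw [hLco, hM]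
    exact Quotient.exact this
  obtain ⟨l, hperm, hsub⟩ := hsubperm
  obtain ⟨u, hu, rfl⟩ := List.sublist_map_iff.mp hsub
  have hund : u.Nodup := hu.nodup (List.nodup_range (n := ℓ))
  refine ⟨⟨↑u, hund⟩, ?_, ?_, ?_⟩
  · intro x hx
    replace hx : x ∈ u := hx
    exact Finset.mem_range.mpr (List.mem_range.mp (hu.subset hx))
  · have h1 : u.length ≤ k := by
      have := hperm.length_eq
      simp only [List.length_map] at this
      rw [this, List.length_take]
      omega
    exact h1
  · have hgoal : ∑ i ∈ Finset.range k, sortPart c ℓ i = (L.take k).sum := by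
      rw [← sum_getD_eq_take]
      rfl
    rw [hgoal, hperm.symm.sum_eq]
    rfl

/-- prefix sums of melds telescope -/
lemma meld_prefix (γ c : ℕ → ℕ) (k : ℕ) :
    ∑ j ∈ Finset.range k, meld γ c j = ∑ i ∈ Finset.range (∑ j ∈ Finset.range k, c j), γ i := by
  induction k with
  | zero => simp
  | succ m ih =>
    rw [Finset.sum_range_succ, ih, meld]
    have h1 : ∑ j ∈ Finset.range m, c j ≤ ∑ j ∈ Finset.range (m + 1), c j := by
      rw [Finset.sum_range_succ]; omega
    have h2 := Finset.sum_Ico_consecutive γ (Nat.zero_le (∑ j ∈ Finset.range m, c j)) h1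
    simp only [← Finset.range_eq_Ico] at h2
    exact h2

lemma meld_Ico (γ c : ℕ → ℕ) {a b : ℕ} (h : a ≤ b) :
    ∑ j ∈ Finset.Ico a b, meld γ c j =
      ∑ i ∈ Finset.Ico (∑ j ∈ Finset.range a, c j) (∑ j ∈ Finset.range b, c j), γ i := by
  have hab : ∑ j ∈ Finset.range a, c j ≤ ∑ j ∈ Finset.range b, c j :=
    Finset.sum_le_sum_of_subset (Finset.range_subset_range.mpr h)
  have h1 := Finset.sum_Ico_consecutive (meld γ c) (Nat.zero_le a) h
  have h2 := Finset.sum_Ico_consecutive γ (Nat.zero_le _) hab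
  simp only [← Finset.range_eq_Ico] at h1 h2
  have h3 := meld_prefix γ c a
  have h4 := meld_prefix γ c b
  omega

end Aux

/-- if `β` refines `α`, then every partial sum of the meld `γ|_α` is also a
partial sum of `γ|_β` (hence is at least the corresponding partial sum of `γ|_β`), and
consequently `sort(γ|_β) ⊴ sort(γ|_α)` in the dominance order on partitions of `N`. -/
theorem stmt9 (N n ℓα ℓβ : ℕ)
    (γ : ℕ → ℕ) (hγ0 : ∀ i, n ≤ i → γ i = 0) (hγsum : ∑ i ∈ Finset.range n, γ i = N)
    (α β : ℕ → ℕ) (hα : IsComposition α ℓα n) (hβ : IsComposition β ℓβ n)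
    (href : Refines β ℓβ α ℓα) :
    (∀ k : ℕ, ∃ k' : ℕ,
        ∑ j ∈ Finset.range k, meld γ α j = ∑ j ∈ Finset.range k', meld γ β j) ∧
      Dominated (sortPart (meld γ β) ℓβ) (sortPart (meld γ α) ℓα) := by
  obtain ⟨t, htmono, ht0, htend, htblk⟩ := href
  have hS : ∀ k, ∑ j ∈ Finset.range k, α j = ∑ j ∈ Finset.range (t k), β j := by
    intro k; induction k with
    | zero => simp [ht0]
    | succ m ih =>
      rw [Finset.sum_range_succ, ih, htblk m]
      have h1 : t m ≤ t (m + 1) := htmono (by omega)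
      have h2 := Finset.sum_Ico_consecutive β (Nat.zero_le (t m)) h1
      simp only [← Finset.range_eq_Ico] at h2
      exact h2
  constructor
  · intro k
    exact ⟨t k, by rw [meld_prefix, meld_prefix, hS]⟩
  · intro k
    obtain ⟨S, hSsub, hScard, hSeq⟩ := sortPart_eq_sum (meld γ β) ℓβ k
    rw [hSeq]
    set b : ℕ → ℕ := fun i => Nat.findGreatest (fun j => t j ≤ i) ℓα with hbdef
    have hb1 : ∀ i ∈ S, t (b i) ≤ i ∧ b i < ℓα ∧ i < t (b i + 1) := by
      intro i hi
      have hiℓ : i < ℓβ := Finset.mem_range.mp (hSsub hi)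
      have hti : t 0 ≤ i := by omega
      have hspec : t (b i) ≤ i := Nat.findGreatest_spec (P := fun j => t j ≤ i) (Nat.zero_le ℓα) hti
      have hle : b i ≤ ℓα := Nat.findGreatest_le ℓα
      have hlt : b i < ℓα := by
        rcases Nat.lt_or_ge (b i) ℓα with h | h
        · exact h
        · exfalso
          have : b i = ℓα := le_antisymm hle h
          rw [this, htend ℓα le_rfl] at hspec
          omega
      refine ⟨hspec, hlt, ?_⟩
      by_contra h
      push_neg at h
      exact Nat.findGreatest_is_greatest (P := fun j => t j ≤ i) (n := ℓα) (Nat.lt_succ_self _) hlt h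
    set K : Finset ℕ := S.image b with hKdef
    have hKsub : K ⊆ Finset.range ℓα := by
      intro j hj
      obtain ⟨i, hi, rfl⟩ := Finset.mem_image.mp hj
      exact Finset.mem_range.mpr (hb1 i hi).2.1
    have hKcard : K.card ≤ k := le_trans Finset.card_image_le hScard
    have hcover : S ⊆ K.biUnion (fun j => Finset.Ico (t j) (t (j + 1))) := by
      intro i hi
      refine Finset.mem_biUnion.mpr ⟨b i, Finset.mem_image_of_mem b hi, ?_⟩
      exact Finset.mem_Ico.mpr ⟨(hb1 i hi).1, (hb1 i hi).2.2⟩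
    have hdisj : (↑K : Set ℕ).PairwiseDisjoint (fun j => Finset.Ico (t j) (t (j + 1))) := by
      intro x _ y _ hxy
      simp only [Function.onFun]
      rw [Finset.disjoint_left]
      intro z hz1 hz2
      simp only [Finset.mem_Ico] at hz1 hz2
      rcases Nat.lt_or_ge x y with h | h
      · have := htmono (show x + 1 ≤ y from h)
        omega
      · have hyx : y < x := by omega
        have := htmono (show y + 1 ≤ x from hyx)
        omega
    calc ∑ i ∈ S, meld γ β i
        ≤ ∑ i ∈ K.biUnion (fun j => Finset.Ico (t j) (t (j + 1))), meld γ β i :=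
          Finset.sum_le_sum_of_subset hcover
      _ = ∑ j ∈ K, ∑ i ∈ Finset.Ico (t j) (t (j + 1)), meld γ β i := Finset.sum_biUnion hdisj
      _ = ∑ j ∈ K, meld γ α j := by
          refine Finset.sum_congr rfl fun j _ => ?_
          rw [meld_Ico γ β (htmono (Nat.le_succ j)), ← hS j, ← hS (j + 1), meld]
      _ ≤ ∑ i ∈ Finset.range k, sortPart (meld γ α) ℓα i :=
          sum_le_sortPart (meld γ α) ℓα k K hKsub hKcard
end

section
/- For n ≥ 3, the number of permutations in the subset S_{{1,2}} · S_{{2,3}} ⋯ S_{{n-1,n}} of S_n (products σ_1 σ_2 ⋯ σ_{n-1} where σ_i ∈ {id, (i, i+1)}) having no fixed points is at least n − 2. -/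
open Finset

/-- The product `σ_1 σ_2 ⋯ σ_m` in `S_{m+1}`, where `σ_i` is the adjacent transposition
`(i, i+1)` if `ε i` is true and the identity otherwise. -/
def adjProd (m : ℕ) (ε : Fin m → Bool) : Equiv.Perm (Fin (m + 1)) :=
  ((List.finRange m).map fun i => if ε i then Equiv.swap i.castSucc i.succ else 1).prod

lemma swap_val (m a : ℕ) (h1 : a < m + 1) (h2 : a + 1 < m + 1) (x : Fin (m+1)) :
    ((Equiv.swap (⟨a, h1⟩ : Fin (m+1)) ⟨a+1, h2⟩) x : ℕ)
      = if (x:ℕ) = a then a+1 else if (x:ℕ) = a+1 then a else (x:ℕ) := by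
  rw [Equiv.swap_apply_def]
  split_ifs <;> simp_all [Fin.ext_iff]

lemma main_prod (m k : ℕ) (hk : k ≤ m) :
    ∀ t, t ≤ m → ∀ x : Fin (m+1),
    ((((List.finRange m).drop t).map fun i : Fin m =>
        if decide ((i:ℕ) ≠ k) then Equiv.swap i.castSucc i.succ else 1).prod x : ℕ)
      = if (x:ℕ) < t then (x:ℕ) else if (x:ℕ) = k then t
        else if (x:ℕ) = m then (if t ≤ k then k+1 else t) else (x:ℕ)+1 := by
  intro t
  induction' hd : m - t with d ih generalizing t
  · intro ht x
    have htm : t = m := by omega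
    subst htm
    have hx := x.isLt
    rw [List.drop_eq_nil_of_le (by simp)]
    simp only [List.map_nil, List.prod_nil, Equiv.Perm.coe_one, id_eq]
    split_ifs <;> omega
  · intro ht x
    have htm : t < m := by omega
    rw [List.drop_eq_getElem_cons (by simpa using htm)]
    simp only [List.map_cons, List.prod_cons, List.getElem_finRange, Fin.cast_mk,
      Equiv.Perm.mul_apply, Fin.val_mk]
    have ih' := ih (t+1) (by omega) (by omega)
    have hx := x.isLt
    by_cases htk : t = k
    · subst htk
      rw [if_neg (by simp)]
      simp only [Equiv.Perm.one_apply]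
      rw [ih' x]
      split_ifs <;> omega
    · rw [if_pos (by simp [htk])]
      have hcast : (⟨t, htm⟩ : Fin m).castSucc = (⟨t, by omega⟩ : Fin (m+1)) := rfl
      have hsucc : (⟨t, htm⟩ : Fin m).succ = (⟨t+1, by omega⟩ : Fin (m+1)) := rfl
      rw [hcast, hsucc, swap_val m t, ih' x]
      split_ifs <;> omega

lemma adj_val (m k : ℕ) (hk : k ≤ m) (x : Fin (m+1)) :
    ((adjProd m (fun i => decide ((i:ℕ) ≠ k))) x : ℕ)
      = if (x:ℕ) = k then 0 else if (x:ℕ) = m then k+1 else (x:ℕ)+1 := by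
  have h := main_prod m k hk 0 (by omega) x
  rw [List.drop_zero] at h
  rw [adjProd, h]
  have hx := x.isLt
  split_ifs <;> omega

/-- for `n = m + 1 ≥ 3`, at least `n - 2` of the permutations arising as
products `σ_1 ⋯ σ_{n-1}` with `σ_i ∈ {id, (i, i+1)}` are fixed-point-free. -/
theorem stmt10 (m : ℕ) (hm : 2 ≤ m) :
    m - 1 ≤
      ((Finset.univ.image (adjProd m)).filter fun π => ∀ i, π i ≠ i).card := by
  classical
  set S : Finset ℕ := insert m (Finset.Icc 1 (m-2)) with hS
  have hcard : S.card = m - 1 := by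
    rw [hS, Finset.card_insert_of_notMem (by simp; omega), Nat.card_Icc]
    omega
  have hmem : ∀ k ∈ S, k ≤ m ∧ 1 ≤ k ∧ (k = m ∨ k ≤ m - 2) := by
    intro k hkS
    rw [hS, Finset.mem_insert, Finset.mem_Icc] at hkS
    omega
  rw [← hcard]
  apply Finset.card_le_card_of_injOn
    (fun k => adjProd m (fun i => decide ((i:ℕ) ≠ k)))
  · intro k hkS
    obtain ⟨hk, hk1, hk2⟩ := hmem k hkS
    rw [Finset.mem_coe, Finset.mem_filter]
    refine ⟨Finset.mem_image_of_mem _ (Finset.mem_univ _), ?_⟩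
    intro i hi
    have hval : ((adjProd m (fun j => decide ((j:ℕ) ≠ k))) i : ℕ) = (i : ℕ) :=
      congrArg Fin.val hi
    rw [adj_val m k hk] at hval
    have hx := i.isLt
    split_ifs at hval <;> omega
  · intro k hkS k' hkS' heq
    obtain ⟨hk, hk1, hk2⟩ := hmem k (Finset.mem_coe.mp hkS)
    obtain ⟨hk', hk1', hk2'⟩ := hmem k' (Finset.mem_coe.mp hkS')
    simp only at heq
    by_contra hne
    have h1 := adj_val m k hk ⟨k, by omega⟩
    have h2 := adj_val m k' hk' ⟨k, by omega⟩
    rw [heq] at h1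
    rw [h1] at h2
    simp only [Fin.val_mk] at h2
    split_ifs at h2 <;> omega
end

section
/- Let λ/μ be a skew partition of size d with ℓ(λ) = n. The permanent of the Jacobi–Trudi matrix H(λ,μ) = (h_{(λ_i−i)−(μ_j−j)})_{i,j=1}^n, viewed as a polynomial in finitely many variables x_1,...,x_m, has the same support as the Schur polynomial s_{(d)}(x_1,...,x_m) = h_d(x_1,...,x_m); in particular per H(λ,μ) has a saturated Newton polytope equal to the permutahedron P_{(d)}. -/
open Finset

/-- The complete homogeneous symmetric polynomial `h_k(x_1, …, x_m)`: the sum of all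
monomials of total degree `k`. -/
noncomputable def hpoly (m k : ℕ) : MvPolynomial (Fin m) ℝ :=
  ∑ α ∈ Finset.Nat.antidiagonalTuple m k, ∏ i, MvPolynomial.X i ^ α i

/-- `h_k` for an integer index: `0` when `k < 0`. -/
noncomputable def hz (m : ℕ) (k : ℤ) : MvPolynomial (Fin m) ℝ :=
  if 0 ≤ k then hpoly m k.toNat else 0

/-- The permanent of a square matrix. -/
noncomputable def permanent {n : ℕ} {R : Type*} [CommSemiring R]
    (A : Matrix (Fin n) (Fin n) R) : R :=
  ∑ π : Equiv.Perm (Fin n), ∏ i, A i (π i)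

namespace Stmt12Aux
open MvPolynomial

variable {m : ℕ}

lemma prod_X_pow (α : Fin m → ℕ) :
    (∏ i, (X i : MvPolynomial (Fin m) ℝ) ^ α i)
      = monomial (Finsupp.equivFunOnFinite.symm α) 1 := by
  set s := Finsupp.equivFunOnFinite.symm α with hs
  have h1 : ∀ i, α i = s i := fun i => rfl
  calc (∏ i, (X i : MvPolynomial (Fin m) ℝ) ^ α i)
      = ∏ i, (X i : MvPolynomial (Fin m) ℝ) ^ s i := by simp_rw [h1]
    _ = ∏ i ∈ s.support, (X i : MvPolynomial (Fin m) ℝ) ^ s i :=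
        (Finset.prod_subset (Finset.subset_univ _) (by
          intro i _ h
          rw [Finsupp.notMem_support_iff.mp h, pow_zero])).symm
    _ = monomial s 1 := prod_X_pow_eq_monomial

lemma coeff_hpoly (k : ℕ) (β : Fin m →₀ ℕ) :
    coeff β (hpoly m k) = if (∑ i, β i) = k then 1 else 0 := by
  unfold hpoly
  rw [coeff_sum]
  simp_rw [prod_X_pow, coeff_monomial, Equiv.symm_apply_eq]
  rw [Finset.sum_ite_eq' (Finset.Nat.antidiagonalTuple m k) (Finsupp.equivFunOnFinite β) (fun _ => (1:ℝ))]
  have : (Finsupp.equivFunOnFinite β ∈ Finset.Nat.antidiagonalTuple m k) ↔ (∑ i, β i = k) := by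
    rw [Finset.Nat.mem_antidiagonalTuple]; rfl
  simp only [this]


/-- Nonnegative coefficients predicate. -/
def Nn (f : MvPolynomial (Fin m) ℝ) : Prop := ∀ β, 0 ≤ coeff β f

lemma Nn_mul {f g : MvPolynomial (Fin m) ℝ} (hf : Nn f) (hg : Nn g) : Nn (f * g) := by
  intro β
  rw [coeff_mul]
  exact Finset.sum_nonneg fun x _ => mul_nonneg (hf _) (hg _)

lemma Nn_one : Nn (1 : MvPolynomial (Fin m) ℝ) := by
  intro β
  classical
  rw [coeff_one]
  split <;> norm_num

lemma Nn_prod {ι : Type*} (s : Finset ι) (f : ι → MvPolynomial (Fin m) ℝ)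
    (h : ∀ i ∈ s, Nn (f i)) : Nn (∏ i ∈ s, f i) :=
  Finset.prod_induction f Nn (fun _ _ => Nn_mul) Nn_one h

lemma Nn_hpoly (k : ℕ) : Nn (hpoly m k) := by
  intro β
  rw [coeff_hpoly]
  split <;> norm_num

lemma sum_univ_eq_degree (β : Fin m →₀ ℕ) : β.degree = ∑ i, β i :=
  Finset.sum_subset (Finset.subset_univ _) (fun i _ h => Finsupp.notMem_support_iff.mp h)

lemma hpoly_hom (k : ℕ) : (hpoly m k).IsHomogeneous k := by
  intro β hβ
  rw [coeff_hpoly] at hβ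
  have h : ∑ i, β i = k := by
    by_contra hc
    rw [if_neg hc] at hβ
    exact hβ rfl
  have := (show β.degree = Finsupp.weight 1 β from DFunLike.congr_fun Finsupp.degree_eq_weight_one β)
  rw [← this, sum_univ_eq_degree, h]

lemma coeff_prod_ne {nn : ℕ} (k : Fin nn → ℕ) (β : Fin m →₀ ℕ)
    (h : coeff β (∏ i, hpoly m (k i)) ≠ 0) : ∑ i, β i = ∑ i, k i := by
  have H : (∏ i, hpoly m (k i)).IsHomogeneous (∑ i, k i) :=
    IsHomogeneous.prod Finset.univ _ _ (fun i _ => hpoly_hom (k i))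
  have h2 := H h
  rw [← (show β.degree = Finsupp.weight 1 β from DFunLike.congr_fun Finsupp.degree_eq_weight_one β), sum_univ_eq_degree] at h2
  exact h2

lemma exists_split (β : Fin m →₀ ℕ) (t : ℕ) (ht : t ≤ ∑ i, β i) :
    ∃ γ : Fin m →₀ ℕ, (∀ i, γ i ≤ β i) ∧ (∑ i, γ i = t) := by
  induction t with
  | zero => exact ⟨0, fun i => Nat.zero_le _, by simp⟩
  | succ t ih =>
    obtain ⟨γ, hle, hsum⟩ := ih (le_trans (Nat.le_succ t) ht)
    have hlt : ∑ i, γ i < ∑ i, β i := by omega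
    have : ∃ i, γ i < β i := by
      by_contra hc
      push_neg at hc
      have : ∀ i, γ i = β i := fun i => le_antisymm (hle i) (hc i)
      simp only [this] at hlt
      omega
    obtain ⟨i, hi⟩ := this
    refine ⟨γ + Finsupp.single i 1, fun j => ?_, ?_⟩
    · have h1 := hle j
      rw [Finsupp.add_apply, Finsupp.single_apply]
      rcases eq_or_ne i j with rfl | hij
      · rw [if_pos rfl]
        omega
      · rw [if_neg hij]
        omega
    · simp only [Finsupp.add_apply, Finset.sum_add_distrib, hsum]
      have : ∑ j, (Finsupp.single i 1 : Fin m →₀ ℕ) j = 1 := by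
        simp [Finsupp.single_apply]
      omega

lemma coeff_prod_pos : ∀ (nn : ℕ) (k : Fin nn → ℕ) (β : Fin m →₀ ℕ),
    (∑ i, β i = ∑ i, k i) → 0 < coeff β (∏ i, hpoly m (k i)) := by
  intro nn
  induction nn with
  | zero =>
    intro k β h
    simp only [Finset.univ_eq_empty, Finset.sum_empty, Finset.prod_empty] at h ⊢
    have hβ : β = 0 := by
      ext i
      have := Finset.sum_eq_zero_iff.mp h i (Finset.mem_univ i)
      simpa using this
    subst hβ
    classical
    rw [coeff_one]
    norm_num
  | succ nn ih =>
    intro k β h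
    rw [Fin.prod_univ_succ]
    have hk0 : k 0 ≤ ∑ i, β i := by
      rw [h, Fin.sum_univ_succ]
      omega
    obtain ⟨γ, hγle, hγs⟩ := exists_split β (k 0) hk0
    set δ : Fin m →₀ ℕ := β - γ with hδ
    have hδap : ∀ i, δ i = β i - γ i := fun i => Finsupp.tsub_apply β γ i
    have hadd : γ + δ = β := by
      ext i
      simp only [Finsupp.add_apply, hδap]
      have := hγle i
      omega
    have hδs : ∑ i, δ i = ∑ i : Fin nn, k i.succ := by
      have h1 : ∑ i, γ i + ∑ i, δ i = ∑ i, β i := by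
        rw [← Finset.sum_add_distrib]
        exact Finset.sum_congr rfl fun i _ => by rw [← Finsupp.add_apply, hadd]
      rw [h, Fin.sum_univ_succ] at h1
      omega
    have hpos1 : 0 < coeff γ (hpoly m (k 0)) := by
      rw [coeff_hpoly, if_pos hγs]
      norm_num
    have hpos2 : 0 < coeff δ (∏ i : Fin nn, hpoly m (k i.succ)) := ih _ _ hδs
    have hmem : (γ, δ) ∈ Finset.HasAntidiagonal.antidiagonal β := by
      rw [Finset.HasAntidiagonal.mem_antidiagonal]
      exact hadd
    rw [coeff_mul]
    calc (0:ℝ) < coeff γ (hpoly m (k 0)) * coeff δ (∏ i : Fin nn, hpoly m (k i.succ)) :=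
          mul_pos hpos1 hpos2
      _ ≤ _ := Finset.single_le_sum
          (f := fun p => coeff p.1 (hpoly m (k 0)) * coeff p.2 (∏ i : Fin nn, hpoly m (k i.succ)))
          (fun p _ => mul_nonneg (Nn_hpoly _ _) (Nn_prod _ _ (fun i _ => Nn_hpoly _) _)) hmem

end Stmt12Aux

/-- for a skew partition `lam/mu` of size `d` with `n` rows, the permanent of
the Jacobi–Trudi matrix `H(lam,mu) = (h_{(lam_i - i) - (mu_j - j)})`, in variables
`x_1, …, x_m`, has the same support as `h_d = s_{(d)}`; in particular it is SNP with
Newton polytope the permutahedron `P_{(d)}`. -/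
theorem stmt12 (m n d : ℕ) (hm : 0 < m) (lam mu : Fin n → ℕ)
    (hlam : Antitone lam) (hmu : Antitone mu) (hle : ∀ i, mu i ≤ lam i)
    (hd : ∑ i, (lam i - mu i) = d)
    (A : Matrix (Fin n) (Fin n) (MvPolynomial (Fin m) ℝ))
    (hA : A = Matrix.of fun i j =>
      hz m (((lam i : ℤ) - (i : ℕ)) - ((mu j : ℤ) - (j : ℕ)))) :
    (permanent A).support = (hpoly m d).support ∧ SNP (permanent A) ∧
      newtonPolytope (permanent A) =
        permutahedron m (fun i => if i = 0 then d else 0) := by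
  classical
  subst hA
  set c : Fin n → Fin n → ℤ :=
    fun i j => ((lam i : ℤ) - (i : ℕ)) - ((mu j : ℤ) - (j : ℕ)) with hc
  set T : Equiv.Perm (Fin n) → MvPolynomial (Fin m) ℝ :=
    fun π => ∏ i, hz m (c i (π i)) with hT
  have hperm : permanent (Matrix.of fun i j => hz m (c i j)) = ∑ π, T π := rfl
  have sumc : ∀ π : Equiv.Perm (Fin n), ∑ i, c i (π i) = (d : ℤ) := by
    intro π
    have h1 : ∑ i, ((mu (π i) : ℤ) - ((π i : ℕ) : ℤ)) = ∑ i, ((mu i : ℤ) - ((i : ℕ) : ℤ)) :=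
      Equiv.sum_comp π (fun j => ((mu j : ℤ) - ((j : ℕ) : ℤ)))
    have h2 : ∑ i, c i (π i)
        = ∑ i, ((lam i : ℤ) - ((i : ℕ) : ℤ)) - ∑ i, ((mu (π i) : ℤ) - ((π i : ℕ) : ℤ)) := by
      rw [← Finset.sum_sub_distrib]
    rw [h2, h1, ← Finset.sum_sub_distrib]
    have h3 : ∀ i ∈ Finset.univ, ((lam i : ℤ) - ((i : ℕ) : ℤ)) - ((mu i : ℤ) - ((i : ℕ) : ℤ))
        = ((lam i - mu i : ℕ) : ℤ) := by
      intro i _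
      have := hle i
      push_cast [Nat.cast_sub this]
      ring
    rw [Finset.sum_congr rfl h3, ← Nat.cast_sum, hd]
  have hTcase : ∀ π : Equiv.Perm (Fin n), (∀ i, 0 ≤ c i (π i)) ∨ T π = 0 := by
    intro π
    by_cases hp : ∀ i, 0 ≤ c i (π i)
    · exact Or.inl hp
    · right
      push_neg at hp
      obtain ⟨i, hi⟩ := hp
      exact Finset.prod_eq_zero (Finset.mem_univ i) (by simp only [hz, if_neg (not_le.mpr hi)])
  have hTval : ∀ π : Equiv.Perm (Fin n), (∀ i, 0 ≤ c i (π i)) →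
      T π = (∏ i, hpoly m (c i (π i)).toNat) ∧ (∑ i, (c i (π i)).toNat) = d := by
    intro π h
    constructor
    · exact Finset.prod_congr rfl fun i _ => by simp only [hz, if_pos (h i)]
    · have h2 : ((∑ i, (c i (π i)).toNat : ℕ) : ℤ) = (d : ℤ) := by
        push_cast
        rw [Finset.sum_congr rfl (fun i _ => Int.toNat_of_nonneg (h i))]
        exact sumc π
      exact_mod_cast h2
  have hTnn : ∀ π : Equiv.Perm (Fin n), Stmt12Aux.Nn (T π) := by
    intro π
    rcases hTcase π with h | h
    · rw [(hTval π h).1]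
      exact Stmt12Aux.Nn_prod _ _ (fun i _ => Stmt12Aux.Nn_hpoly _)
    · rw [h]
      intro β
      simp
  have key : ∀ β : Fin m →₀ ℕ, MvPolynomial.coeff β (∑ π, T π) ≠ 0 ↔ ∑ i, β i = d := by
    intro β
    rw [MvPolynomial.coeff_sum]
    constructor
    · intro h
      obtain ⟨π, -, hπ⟩ := Finset.exists_ne_zero_of_sum_ne_zero h
      rcases hTcase π with hp | hp
      · obtain ⟨he, hs⟩ := hTval π hp
        rw [he] at hπ
        rw [Stmt12Aux.coeff_prod_ne _ _ hπ, hs]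
      · rw [hp] at hπ
        simp at hπ
    · intro h
      have hp1 : ∀ i, 0 ≤ c i ((1 : Equiv.Perm (Fin n)) i) := by
        intro i
        have := hle i
        simp only [hc, Equiv.Perm.one_apply]
        omega
      have hpos : 0 < MvPolynomial.coeff β (T 1) := by
        obtain ⟨he, hs⟩ := hTval 1 hp1
        rw [he]
        exact Stmt12Aux.coeff_prod_pos _ _ _ (h.trans hs.symm)
      have hlt : 0 < ∑ π, MvPolynomial.coeff β (T π) :=
        lt_of_lt_of_le hpos (Finset.single_le_sum (fun π _ => hTnn π β) (Finset.mem_univ 1))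
      exact hlt.ne'
  have hsupp : (∑ π, T π).support = (hpoly m d).support := by
    ext β
    rw [MvPolynomial.mem_support_iff, MvPolynomial.mem_support_iff, key β]
    rcases eq_or_ne (∑ i, β i) d with h | h <;> simp [Stmt12Aux.coeff_hpoly, h]
  -- geometry
  set lam' : ℕ → ℕ := fun i => if i = 0 then d else 0 with hlam'
  set Vset : Set (Fin m → ℝ) :=
    {v | ∃ σ : Equiv.Perm (Fin m), v = fun i => (lam' (σ i : ℕ) : ℝ)} with hVset
  have hPermEq : permutahedron m lam' = convexHull ℝ Vset := rfl
  set Gen : Set (Fin m → ℝ) :=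
    {v | ∃ α : Fin m →₀ ℕ, (∑ i, α i = d) ∧ v = fun i => ((α i : ℕ) : ℝ)} with hGen
  have hNPEq : newtonPolytope (∑ π, T π) = convexHull ℝ Gen := by
    unfold newtonPolytope
    congr 1
    ext v
    constructor
    · rintro ⟨α, hα, rfl⟩
      exact ⟨α, (key α).mp (MvPolynomial.mem_support_iff.mp hα), rfl⟩
    · rintro ⟨α, hα, rfl⟩
      exact ⟨α, MvPolynomial.mem_support_iff.mpr ((key α).mpr hα), rfl⟩
  obtain ⟨z0, hz0⟩ : ∃ z : Fin m, (z : ℕ) = 0 := ⟨⟨0, hm⟩, rfl⟩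
  have hVG : Vset ⊆ Gen := by
    rintro v ⟨σ, rfl⟩
    refine ⟨Finsupp.single (σ.symm z0) d, ?_, ?_⟩
    · simp [Finsupp.single_apply]
    · funext i
      have hcond : ((σ i : ℕ) = 0) ↔ (σ.symm z0 = i) := by
        rw [Equiv.symm_apply_eq]
        constructor
        · intro h
          exact (Fin.ext (by rw [hz0, h])).symm
        · intro h
          rw [← h, hz0]
      have hval : lam' ((σ i : ℕ)) = Finsupp.single (σ.symm z0) d i := by
        rw [Finsupp.single_apply]
        simp only [hlam']
        by_cases h : (σ i : ℕ) = 0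
        · rw [if_pos h, if_pos (hcond.mp h)]
        · rw [if_neg h, if_neg (fun hh => h (hcond.mpr hh))]
      exact congrArg (fun k : ℕ => (k : ℝ)) hval
  have hGV : Gen ⊆ convexHull ℝ Vset := by
    rintro v ⟨α, hα, rfl⟩
    rcases Nat.eq_zero_or_pos d with hd0 | hdpos
    · have hα0 : ∀ i, α i = 0 := by
        intro i
        have := Finset.sum_eq_zero_iff.mp (hα.trans hd0) i (Finset.mem_univ i)
        simpa using this
      apply subset_convexHull
      refine ⟨1, ?_⟩
      funext i
      simp [hα0 i, hlam', hd0]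
    · have hdR : (0:ℝ) < (d:ℝ) := by exact_mod_cast hdpos
      have hw : ∀ j ∈ Finset.univ, (0:ℝ) ≤ ((α j : ℕ) : ℝ) := fun j _ => Nat.cast_nonneg _
      have h0 : ∑ j, ((α j : ℕ) : ℝ) = (d:ℝ) := by
        rw [← Nat.cast_sum, hα]
      have hws : (0:ℝ) < ∑ j, ((α j : ℕ) : ℝ) := by rw [h0]; exact hdR
      have hzs : ∀ j ∈ Finset.univ,
          (fun i => if i = j then (d:ℝ) else 0) ∈ Vset := by
        intro j _
        refine ⟨Equiv.swap z0 j, ?_⟩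
        funext i
        have hcond : ((Equiv.swap z0 j i : ℕ) = 0) ↔ i = j := by
          have h1 : ((Equiv.swap z0 j i : ℕ) = 0) ↔ Equiv.swap z0 j i = z0 := by
            constructor
            · intro h
              exact Fin.ext (by rw [h, hz0])
            · intro h
              rw [h, hz0]
          rw [h1, Equiv.swap_apply_eq_iff, Equiv.swap_apply_left]
        have hval : (if i = j then (d:ℕ) else 0) = lam' ((Equiv.swap z0 j i : ℕ)) := by
          simp only [hlam']
          by_cases h : i = j
          · rw [if_pos h, if_pos (hcond.mpr h)]
          · rw [if_neg h, if_neg (fun hh => h (hcond.mp hh))]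
        calc (if i = j then (d:ℝ) else 0)
            = ((if i = j then (d:ℕ) else 0 : ℕ) : ℝ) := by
              by_cases h : i = j <;> simp [h]
          _ = (lam' ((Equiv.swap z0 j i : ℕ)) : ℝ) := congrArg (fun k : ℕ => (k:ℝ)) hval
      have hmem := Finset.centerMass_mem_convexHull (t := Finset.univ)
        (w := fun j => ((α j : ℕ) : ℝ))
        (z := fun j => (fun i => if i = j then (d:ℝ) else 0)) hw hws hzs
      have hcm : Finset.univ.centerMass (fun j => ((α j : ℕ) : ℝ))
          (fun j => (fun i => if i = j then (d:ℝ) else 0)) = fun i => ((α i : ℕ) : ℝ) := by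
        funext i
        rw [Finset.centerMass, h0]
        simp only [Pi.smul_apply, Finset.sum_apply, smul_eq_mul]
        have h1 : ∑ j, ((α j : ℕ) : ℝ) * (if i = j then (d:ℝ) else 0) = ((α i : ℕ):ℝ) * d := by
          simp only [mul_ite, mul_zero]
          rw [Finset.sum_ite_eq]
          simp
        rw [h1]
        field_simp
      rw [← hcm]
      exact hmem
  have hhyper : convexHull ℝ Gen ⊆ {v : Fin m → ℝ | ∑ i, v i = (d:ℝ)} := by
    apply convexHull_min
    · rintro v ⟨γ, hγ, rfl⟩
      show ∑ i, ((γ i : ℕ) : ℝ) = (d:ℝ)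
      rw [← Nat.cast_sum, hγ]
    · intro x hx y hy a b ha hb hab
      show ∑ i, (a • x + b • y) i = (d:ℝ)
      simp only [Pi.add_apply, Pi.smul_apply, smul_eq_mul]
      rw [Finset.sum_add_distrib, ← Finset.mul_sum, ← Finset.mul_sum]
      rw [Set.mem_setOf_eq] at hx hy
      rw [hx, hy, ← add_mul, hab, one_mul]
  have hSNP : SNP (∑ π, T π) := by
    intro α
    constructor
    · intro hmem
      rw [hNPEq] at hmem
      have h1 : ∑ i, ((α i : ℕ) : ℝ) = (d:ℝ) := hhyper hmem
      have h2 : ∑ i, α i = d := by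
        have : ((∑ i, α i : ℕ) : ℝ) = ((d:ℕ):ℝ) := by
          rw [Nat.cast_sum]
          exact h1
        exact_mod_cast this
      refine ⟨Finsupp.equivFunOnFinite.symm α, ?_, fun i => rfl⟩
      exact MvPolynomial.mem_support_iff.mpr ((key _).mpr h2)
    · rintro ⟨β, hβ, hβα⟩
      rw [hNPEq]
      apply subset_convexHull
      refine ⟨β, (key β).mp (MvPolynomial.mem_support_iff.mp hβ), ?_⟩
      funext i
      rw [hβα i]
  have hNPPerm : newtonPolytope (∑ π, T π) = permutahedron m lam' := by
    rw [hNPEq, hPermEq]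
    apply Set.Subset.antisymm
    · exact convexHull_min hGV (convex_convexHull ℝ Vset)
    · exact convexHull_min (hVG.trans (subset_convexHull ℝ Gen)) (convex_convexHull ℝ Gen)
  refine ⟨?_, ?_, ?_⟩
  · rw [hperm]; exact hsupp
  · rw [hperm]; exact hSNP
  · rw [hperm]; exact hNPPerm
end
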